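/- arXiv:1702.06226 — 3 statements merged into one kernel-verified Lean document; each statement's English description precedes it below -/
import Mathlib

section
/- In the discrete Itô setting (see context), the full sums A_m = Σ_{k=1}^m Im(e^{−iΦ_k}G_k)·R_k and B_m = Σ_{k=1}^m Re(e^{−iΦ_k}G_k)·S_k satisfy E[A_m · B_m] = 0. -/
open MeasureTheory ProbabilityTheory Real
open scoped NNReal

lemma aux_exp_im (φ : ℝ) (z : ℂ) :
    (Complex.exp (-(φ:ℂ) * Complex.I) * z).im = z.im * Real.cos φ - z.re * Real.sin φ := by
  rw [Complex.exp_mul_I]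
  simp only [Complex.add_im, Complex.add_re, Complex.mul_im, Complex.mul_re,
    Complex.cos_neg, Complex.sin_neg, Complex.neg_re, Complex.neg_im, Complex.I_re, Complex.I_im,
    Complex.cos_ofReal_re, Complex.cos_ofReal_im, Complex.sin_ofReal_re, Complex.sin_ofReal_im]
  ring

lemma aux_exp_re (φ : ℝ) (z : ℂ) :
    (Complex.exp (-(φ:ℂ) * Complex.I) * z).re = z.re * Real.cos φ + z.im * Real.sin φ := by
  rw [Complex.exp_mul_I]
  simp only [Complex.add_im, Complex.add_re, Complex.mul_im, Complex.mul_re,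
    Complex.cos_neg, Complex.sin_neg, Complex.neg_re, Complex.neg_im, Complex.I_re, Complex.I_im,
    Complex.cos_ofReal_re, Complex.cos_ofReal_im, Complex.sin_ofReal_re, Complex.sin_ofReal_im]
  ring

lemma aux_sq_exp_int {b : ℝ} (hb : 0 < b) :
    Integrable (fun x : ℝ => x ^ 2 * Real.exp (-b * x ^ 2)) := by
  apply Integrable.mono' ((integrable_exp_neg_mul_sq (by positivity : 0 < b / 2)).const_mul (2 / b))
  · exact ((measurable_id.pow_const 2).mul
      (((measurable_id.pow_const 2).const_mul (-b)).exp)).aestronglyMeasurable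
  · filter_upwards with x
    have h4 := Real.exp_pos ((b / 2) * x ^ 2)
    have h2 : x ^ 2 * Real.exp (-(b / 2) * x ^ 2) ≤ 2 / b := by
      have h3 := Real.add_one_le_exp ((b / 2) * x ^ 2)
      have h5 : Real.exp (-(b / 2) * x ^ 2) = (Real.exp ((b / 2) * x ^ 2))⁻¹ := by
        rw [← Real.exp_neg]; ring_nf
      have h7 : b * x ^ 2 ≤ 2 * Real.exp ((b / 2) * x ^ 2) := by nlinarith
      have h6 : x ^ 2 ≤ (2 / b) * Real.exp ((b / 2) * x ^ 2) := by
        rw [div_mul_eq_mul_div, le_div_iff₀ hb]; linarith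
      rw [h5]
      calc x ^ 2 * (Real.exp ((b / 2) * x ^ 2))⁻¹
          ≤ ((2 / b) * Real.exp ((b / 2) * x ^ 2)) * (Real.exp ((b / 2) * x ^ 2))⁻¹ :=
            mul_le_mul_of_nonneg_right h6 (inv_nonneg.mpr h4.le)
        _ = 2 / b := by field_simp
    have h1 : Real.exp (-b * x ^ 2) = Real.exp (-(b / 2) * x ^ 2) * Real.exp (-(b / 2) * x ^ 2) := by
      rw [← Real.exp_add]; ring_nf
    calc ‖x ^ 2 * Real.exp (-b * x ^ 2)‖ = x ^ 2 * Real.exp (-b * x ^ 2) :=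
          Real.norm_of_nonneg (by positivity)
      _ = (x ^ 2 * Real.exp (-(b / 2) * x ^ 2)) * Real.exp (-(b / 2) * x ^ 2) := by rw [h1]; ring
      _ ≤ (2 / b) * Real.exp (-(b / 2) * x ^ 2) :=
          mul_le_mul_of_nonneg_right h2 (Real.exp_pos _).le

lemma aux_gauss_int {v : ℝ≥0} (hv : v ≠ 0) {g : ℝ → ℝ}
    (h : Integrable (fun x => g x * Real.exp (-(2 * (v : ℝ))⁻¹ * x ^ 2)) volume) :
    Integrable g (gaussianReal 0 v) := by
  rw [gaussianReal_of_var_ne_zero _ hv,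
    integrable_withDensity_iff (measurable_gaussianPDF _ _)
      (ae_of_all _ fun x => ENNReal.ofReal_lt_top)]
  have heq : (fun x => g x * (gaussianPDF 0 v x).toReal)
      = fun x => (Real.sqrt (2 * π * v))⁻¹ * (g x * Real.exp (-(2 * (v : ℝ))⁻¹ * x ^ 2)) := by
    funext x
    rw [gaussianPDF, ENNReal.toReal_ofReal (gaussianPDFReal_nonneg _ _ _), gaussianPDFReal]
    have hvpos : (0:ℝ) < (v:ℝ) := NNReal.coe_pos.mpr (zero_lt_iff.mpr hv)
    have hx : -(x - 0) ^ 2 / (2 * (v : ℝ)) = -(2 * (v : ℝ))⁻¹ * x ^ 2 := by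
      field_simp; ring
    rw [hx]; ring
  rw [heq]
  exact h.const_mul _

lemma gauss_integrable_id {v : ℝ≥0} (hv : v ≠ 0) :
    Integrable (fun x : ℝ => x) (gaussianReal 0 v) := by
  have hvpos : (0:ℝ) < (v:ℝ) := NNReal.coe_pos.mpr (zero_lt_iff.mpr hv)
  exact aux_gauss_int hv (integrable_mul_exp_neg_mul_sq (by positivity))

lemma gauss_integrable_sq {v : ℝ≥0} (hv : v ≠ 0) :
    Integrable (fun x : ℝ => x ^ 2) (gaussianReal 0 v) := by
  have hvpos : (0:ℝ) < (v:ℝ) := NNReal.coe_pos.mpr (zero_lt_iff.mpr hv)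
  exact aux_gauss_int hv (aux_sq_exp_int (by positivity))

lemma gauss_integral_id (v : ℝ≥0) : ∫ x, x ∂(gaussianReal 0 v) = 0 := by
  have hone : (NNReal.mk ((-1:ℝ)^2) (sq_nonneg _)) = 1 := by ext; norm_num
  have h : (gaussianReal 0 v).map (fun x => -1 * x) = gaussianReal 0 v := by
    rw [gaussianReal_map_const_mul (μ := 0) (v := v) (-1), hone, one_mul, mul_zero]
  have h2 : ∫ x, x ∂(gaussianReal 0 v) = ∫ x, -1 * x ∂(gaussianReal 0 v) := by
    conv_lhs => rw [← h]
    exact integral_map (μ := gaussianReal 0 v) (φ := fun x : ℝ => -1 * x)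
      (f := fun x : ℝ => x) (by fun_prop) aestronglyMeasurable_id
  simp only [neg_one_mul] at h2
  rw [integral_neg] at h2
  linarith

lemma aux_indepFun_of_indep {Ω : Type*} [MeasurableSpace Ω] {P : Measure Ω}
    {mA mB : MeasurableSpace Ω} (h : Indep mA mB P) {X Y : Ω → ℝ}
    (hX : Measurable[mA] X) (hY : Measurable[mB] Y) : IndepFun X Y P :=
  indep_of_indep_of_le_left (indep_of_indep_of_le_right h (measurable_iff_comap_le.mp hY))
    (measurable_iff_comap_le.mp hX)

lemma aux_zero_mul {Ω : Type*} [MeasurableSpace Ω] (P : Measure Ω)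
    {g H : Ω → ℝ} (h : IndepFun g H P) (hg : AEStronglyMeasurable g P)
    (hH : AEStronglyMeasurable H P) (h0 : ∫ ω, g ω ∂P = 0) :
    ∫ ω, g ω * H ω ∂P = 0 := by
  have := h.integral_mul_eq_mul_integral hg hH
  calc ∫ ω, g ω * H ω ∂P = (∫ ω, g ω ∂P) * ∫ ω, H ω ∂P := this
    _ = 0 := by rw [h0, zero_mul]

lemma aux_int4 {Ω : Type*} [MeasurableSpace Ω] {μ : Measure Ω} {f1 f2 f3 f4 : Ω → ℝ}
    (h1 : Integrable f1 μ) (h2 : Integrable f2 μ) (h3 : Integrable f3 μ) (h4 : Integrable f4 μ) :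
    ∫ ω, f1 ω + f2 ω - f3 ω - f4 ω ∂μ =
      (∫ ω, f1 ω ∂μ) + (∫ ω, f2 ω ∂μ) - (∫ ω, f3 ω ∂μ) - ∫ ω, f4 ω ∂μ := by
  have e1 := integral_sub ((h1.add h2).sub h3) h4
  have e2 := integral_sub (h1.add h2) h3
  have e3 := integral_add h1 h2
  simp only [Pi.add_apply, Pi.sub_apply] at e1 e2 e3
  rw [e1, e2, e3]

/-- Discrete analogue of Theorem 2 of the paper: in the discrete Itô setting, the full sums
`A_m = Σ_{k<m} Im(e^{-iΦ_k}G_k)·R_k` and `B_m = Σ_{k<m} Re(e^{-iΦ_k}G_k)·S_k` (with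
`Φ_k, R_k, S_k` essentially bounded and measurable with respect to the σ-algebra generated by
the previous noises `G_0, …, G_{k-1}`) are uncorrelated: `E[A_m · B_m] = 0`. -/
theorem discrete_ito_AB_uncorrelated
    {Ω : Type*} [MeasurableSpace Ω] (P : Measure Ω) [IsProbabilityMeasure P]
    (m : ℕ) (v : ℝ≥0) (hv : 0 < v)
    (G : ℕ → Ω → ℂ) (hGmeas : ∀ k, Measurable (G k))
    (hindep : iIndepFun (m := fun _ : Fin m × Bool => (inferInstance : MeasurableSpace ℝ))
      (fun p : Fin m × Bool => fun ω => if p.2 then (G p.1 ω).re else (G p.1 ω).im) P)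
    (hlaw : ∀ p : Fin m × Bool,
      P.map (fun ω => if p.2 then (G p.1 ω).re else (G p.1 ω).im) = gaussianReal 0 v)
    (𝓕 : ℕ → MeasurableSpace Ω)
    (h𝓕 : ∀ k, 𝓕 k = ⨆ j ∈ Finset.range k,
      MeasurableSpace.comap (G j) (inferInstance : MeasurableSpace ℂ))
    (Φ R S : ℕ → Ω → ℝ)
    (hΦmeas : ∀ k < m, Measurable[𝓕 k] (Φ k))
    (hRmeas : ∀ k < m, Measurable[𝓕 k] (R k))
    (hSmeas : ∀ k < m, Measurable[𝓕 k] (S k))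
    (hΦbdd : ∀ k < m, ∃ C : ℝ, ∀ᵐ ω ∂P, |Φ k ω| ≤ C)
    (hRbdd : ∀ k < m, ∃ C : ℝ, ∀ᵐ ω ∂P, |R k ω| ≤ C)
    (hSbdd : ∀ k < m, ∃ C : ℝ, ∀ᵐ ω ∂P, |S k ω| ≤ C)
    (A B : ℕ → Ω → ℝ)
    (hA : ∀ n ω, A n ω =
      ∑ k ∈ Finset.range n, (Complex.exp (-(Φ k ω : ℂ) * Complex.I) * G k ω).im * R k ω)
    (hB : ∀ n ω, B n ω =
      ∑ k ∈ Finset.range n, (Complex.exp (-(Φ k ω : ℂ) * Complex.I) * G k ω).re * S k ω) :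
    ∫ ω, A m ω * B m ω ∂P = 0 := by
  classical
  -- the family of 2m real coordinates
  set F : Fin m × Bool → Ω → ℝ :=
    fun p : Fin m × Bool => fun ω => if p.2 then (G p.1 ω).re else (G p.1 ω).im with hFdef
  -- ambient measurability of the σ-algebras 𝓕 k
  have hamb : ∀ j, 𝓕 j ≤ (inferInstance : MeasurableSpace Ω) := by
    intro j; rw [h𝓕]
    exact iSup₂_le fun i _ => (hGmeas i).comap_le
  have hFmeas : ∀ p, Measurable (F p) := by
    rintro ⟨k, b⟩
    cases b
    · simpa [hFdef, Function.comp_def] using Complex.measurable_im.comp (hGmeas k)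
    · simpa [hFdef, Function.comp_def] using Complex.measurable_re.comp (hGmeas k)
  have hFvalt : ∀ (i : ℕ) (hi : i < m), F (⟨i, hi⟩, true) = fun ω => (G i ω).re := by
    intro i hi; funext ω; simp [hFdef]
  have hFvalf : ∀ (i : ℕ) (hi : i < m), F (⟨i, hi⟩, false) = fun ω => (G i ω).im := by
    intro i hi; funext ω; simp [hFdef]
  -- laws and moments
  have hFint : ∀ p, Integrable (F p) P := by
    intro p
    have h1 : Integrable (fun x : ℝ => x) (P.map (F p)) := by
      rw [hlaw p]; exact gauss_integrable_id hv.ne'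
    exact (integrable_map_measure aestronglyMeasurable_id (hFmeas p).aemeasurable).mp h1
  have hFsqint : ∀ p, Integrable (fun ω => F p ω ^ 2) P := by
    intro p
    have h1 : Integrable (fun x : ℝ => x ^ 2) (P.map (F p)) := by
      rw [hlaw p]; exact gauss_integrable_sq hv.ne'
    exact (integrable_map_measure (by fun_prop) (hFmeas p).aemeasurable).mp h1
  have hFzero : ∀ p, ∫ ω, F p ω ∂P = 0 := by
    intro p
    have h1 := integral_map (μ := P) (φ := F p) (f := fun x : ℝ => x)
      (hFmeas p).aemeasurable aestronglyMeasurable_id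
    rw [hlaw p, gauss_integral_id] at h1
    exact h1.symm
  have hFsq : ∀ p, ∫ ω, F p ω ^ 2 ∂P = ∫ x, x ^ 2 ∂(gaussianReal 0 v) := by
    intro p
    have h1 := integral_map (μ := P) (φ := F p) (f := fun x : ℝ => x ^ 2)
      (hFmeas p).aemeasurable (by fun_prop)
    rw [hlaw p] at h1
    exact h1.symm
  -- independence of each coordinate from all the others
  set M : Fin m × Bool → MeasurableSpace Ω :=
    fun q => ⨆ p ∈ ({q}ᶜ : Set (Fin m × Bool)), MeasurableSpace.comap (F p) inferInstance
    with hMdef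
  have hM_le : ∀ q, M q ≤ (inferInstance : MeasurableSpace Ω) :=
    fun q => iSup₂_le fun p _ => (hFmeas p).comap_le
  have hIndep : ∀ q, Indep (MeasurableSpace.comap (F q) inferInstance) (M q) P := by
    intro q
    have h2 := indep_iSup_of_disjoint
      (m := fun p : Fin m × Bool => MeasurableSpace.comap (F p) inferInstance)
      (fun p => (hFmeas p).comap_le) hindep (S := {q}) (T := {q}ᶜ) disjoint_compl_right
    simpa [hMdef] using h2
  have hFpm : ∀ q p, p ≠ q → Measurable[M q] (F p) := by
    intro q p hpq
    have hle : MeasurableSpace.comap (F p) inferInstance ≤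
        ⨆ r ∈ ({q}ᶜ : Set (Fin m × Bool)), MeasurableSpace.comap (F r) inferInstance :=
      le_biSup (fun r => MeasurableSpace.comap (F r) inferInstance) (by simp [hpq])
    exact measurable_iff_comap_le.mpr hle
  -- measurability of earlier noises w.r.t. M q
  have hGMq : ∀ (q : Fin m × Bool) (i : ℕ) (hi : i < m), i ≠ (q.1 : ℕ) → Measurable[M q] (G i) := by
    intro q i hi hne
    have hne1 : ((⟨i, hi⟩ : Fin m), true) ≠ q := by
      intro hc; apply hne; rw [← hc]
    have hne2 : ((⟨i, hi⟩ : Fin m), false) ≠ q := by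
      intro hc; apply hne; rw [← hc]
    have hre : Measurable[M q] fun ω => (G i ω).re := by
      have := hFpm q _ hne1; rwa [hFvalt i hi] at this
    have him : Measurable[M q] fun ω => (G i ω).im := by
      have := hFpm q _ hne2; rwa [hFvalf i hi] at this
    have hGeq : G i = fun ω => (((G i ω).re : ℂ) + ((G i ω).im : ℂ) * Complex.I) :=
      funext fun ω => (Complex.re_add_im _).symm
    rw [hGeq]
    exact (Complex.measurable_ofReal.comp hre).add
      ((Complex.measurable_ofReal.comp him).mul measurable_const)
  have hF_le : ∀ (q : Fin m × Bool) (j : ℕ), j ≤ (q.1 : ℕ) → 𝓕 j ≤ M q := by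
    intro q j hj
    rw [h𝓕]
    refine iSup₂_le fun i hi => ?_
    have hij : i < j := Finset.mem_range.mp hi
    have him : i < m := lt_of_lt_of_le (lt_of_lt_of_le hij hj) (le_of_lt q.1.2)
    exact measurable_iff_comap_le.mp
      (hGMq q i him (Nat.ne_of_lt (lt_of_lt_of_le hij hj)))
  -- key zero-integral lemmas
  have hzeroL : ∀ (p q : Fin m × Bool) (U : Ω → ℝ), q ≠ p → Measurable[M p] U →
      ∫ ω, F p ω * (F q ω * U ω) ∂P = 0 := by
    intro p q U hqp hU
    have hH : Measurable[M p] fun ω => F q ω * U ω := (hFpm p q hqp).mul hU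
    exact aux_zero_mul P
      (aux_indepFun_of_indep (hIndep p) (measurable_iff_comap_le.mpr le_rfl) hH)
      (hFmeas p).aestronglyMeasurable
      ((hH.mono (hM_le p) le_rfl).aestronglyMeasurable) (hFzero p)
  have hdiag : ∀ (q : Fin m × Bool) (U : Ω → ℝ), Measurable[M q] U →
      ∫ ω, F q ω * (F q ω * U ω) ∂P = (∫ x, x ^ 2 ∂(gaussianReal 0 v)) * ∫ ω, U ω ∂P := by
    intro q U hU
    have hIF : IndepFun (F q) U P :=
      aux_indepFun_of_indep (hIndep q) (measurable_iff_comap_le.mpr le_rfl) hU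
    have hIF2 : IndepFun (fun ω => F q ω ^ 2) U P :=
      hIF.comp (measurable_id.pow_const 2) measurable_id
    have h1 := hIF2.integral_mul_eq_mul_integral
      (((hFmeas q).pow_const 2).aestronglyMeasurable)
      ((hU.mono (hM_le q) le_rfl).aestronglyMeasurable)
    calc ∫ ω, F q ω * (F q ω * U ω) ∂P = ∫ ω, F q ω ^ 2 * U ω ∂P := by
          apply integral_congr_ae; filter_upwards with ω; ring
      _ = (∫ ω, F q ω ^ 2 ∂P) * ∫ ω, U ω ∂P := h1
      _ = (∫ x, x ^ 2 ∂(gaussianReal 0 v)) * ∫ ω, U ω ∂P := by rw [hFsq q]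
  have hFFint : ∀ p q, Integrable (fun ω => F p ω * F q ω) P := by
    intro p q
    rcases eq_or_ne p q with rfl | hpq
    · have := hFsqint p
      simpa [pow_two] using this
    · exact (hindep.indepFun hpq).integrable_mul (hFint p) (hFint q)
  have hint : ∀ (p q : Fin m × Bool) (U : Ω → ℝ) (C : ℝ), Measurable U →
      (∀ᵐ ω ∂P, |U ω| ≤ C) → Integrable (fun ω => F p ω * (F q ω * U ω)) P := by
    intro p q U C hU hUb
    have h1 : Integrable (fun ω => U ω * (F p ω * F q ω)) P :=
      (hFFint p q).bdd_mul hU.aestronglyMeasurable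
        (by filter_upwards [hUb] with ω hω; simpa [Real.norm_eq_abs] using hω)
    exact h1.congr (ae_of_all _ fun ω => by ring)
  -- the per-pair result
  have hpair : ∀ k l (hk : k < m) (hl : l < m),
      Integrable (fun ω => ((Complex.exp (-(Φ k ω : ℂ) * Complex.I) * G k ω).im * R k ω) *
        ((Complex.exp (-(Φ l ω : ℂ) * Complex.I) * G l ω).re * S l ω)) P ∧
      ∫ ω, ((Complex.exp (-(Φ k ω : ℂ) * Complex.I) * G k ω).im * R k ω) *
        ((Complex.exp (-(Φ l ω : ℂ) * Complex.I) * G l ω).re * S l ω) ∂P = 0 := by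
    intro k l hk hl
    -- bounded multipliers
    obtain ⟨CR, hCR⟩ := hRbdd k hk
    obtain ⟨CS, hCS⟩ := hSbdd l hl
    -- common facts about the four bounded multipliers
    have hUfact : ∀ (t1 t2 : ℝ → ℝ), Measurable t1 → Measurable t2 →
        (∀ x, |t1 x| ≤ 1) → (∀ x, |t2 x| ≤ 1) →
        Measurable (fun ω => t1 (Φ k ω) * R k ω * (t2 (Φ l ω) * S l ω)) ∧
        (∀ᵐ ω ∂P, |t1 (Φ k ω) * R k ω * (t2 (Φ l ω) * S l ω)| ≤ CR * CS) ∧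
        ∀ q : Fin m × Bool, k ≤ (q.1 : ℕ) → l ≤ (q.1 : ℕ) →
          Measurable[M q] (fun ω => t1 (Φ k ω) * R k ω * (t2 (Φ l ω) * S l ω)) := by
      intro t1 t2 ht1 ht2 ht1b ht2b
      refine ⟨?_, ?_, ?_⟩
      · exact ((ht1.comp ((hΦmeas k hk).mono (hamb k) le_rfl)).mul
          ((hRmeas k hk).mono (hamb k) le_rfl)).mul
          ((ht2.comp ((hΦmeas l hl).mono (hamb l) le_rfl)).mul
          ((hSmeas l hl).mono (hamb l) le_rfl))
      · filter_upwards [hCR, hCS] with ω h1 h2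
        have hA1 : |t1 (Φ k ω) * R k ω| ≤ |R k ω| := by
          rw [abs_mul]; exact mul_le_of_le_one_left (abs_nonneg _) (ht1b _)
        have hA2 : |t2 (Φ l ω) * S l ω| ≤ |S l ω| := by
          rw [abs_mul]; exact mul_le_of_le_one_left (abs_nonneg _) (ht2b _)
        calc |t1 (Φ k ω) * R k ω * (t2 (Φ l ω) * S l ω)|
            = |t1 (Φ k ω) * R k ω| * |t2 (Φ l ω) * S l ω| := abs_mul _ _
          _ ≤ CR * CS := mul_le_mul (hA1.trans h1) (hA2.trans h2) (abs_nonneg _)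
              (le_trans (abs_nonneg _) (hA1.trans h1))
      · intro q hkq hlq
        exact ((ht1.comp ((hΦmeas k hk).mono (hF_le q k hkq) le_rfl)).mul
          ((hRmeas k hk).mono (hF_le q k hkq) le_rfl)).mul
          ((ht2.comp ((hΦmeas l hl).mono (hF_le q l hlq) le_rfl)).mul
          ((hSmeas l hl).mono (hF_le q l hlq) le_rfl))
    obtain ⟨hUccM, hUccB, hUccq⟩ := hUfact Real.cos Real.cos Real.measurable_cos
      Real.measurable_cos (fun x => Real.abs_cos_le_one x) (fun x => Real.abs_cos_le_one x)
    obtain ⟨hUcsM, hUcsB, hUcsq⟩ := hUfact Real.cos Real.sin Real.measurable_cos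
      Real.measurable_sin (fun x => Real.abs_cos_le_one x) (fun x => Real.abs_sin_le_one x)
    obtain ⟨hUscM, hUscB, hUscq⟩ := hUfact Real.sin Real.cos Real.measurable_sin
      Real.measurable_cos (fun x => Real.abs_sin_le_one x) (fun x => Real.abs_cos_le_one x)
    obtain ⟨hUssM, hUssB, hUssq⟩ := hUfact Real.sin Real.sin Real.measurable_sin
      Real.measurable_sin (fun x => Real.abs_sin_le_one x) (fun x => Real.abs_sin_le_one x)
    -- coordinates
    have hkf := hFvalf k hk
    have hkt := hFvalt k hk
    have hlf := hFvalf l hl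
    have hlt := hFvalt l hl
    -- pointwise decomposition into four pieces
    have hXY : ∀ ω, ((Complex.exp (-(Φ k ω : ℂ) * Complex.I) * G k ω).im * R k ω) *
        ((Complex.exp (-(Φ l ω : ℂ) * Complex.I) * G l ω).re * S l ω) =
        F (⟨k, hk⟩, false) ω * (F (⟨l, hl⟩, true) ω *
          (Real.cos (Φ k ω) * R k ω * (Real.cos (Φ l ω) * S l ω)))
        + F (⟨k, hk⟩, false) ω * (F (⟨l, hl⟩, false) ω *
          (Real.cos (Φ k ω) * R k ω * (Real.sin (Φ l ω) * S l ω)))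
        - F (⟨k, hk⟩, true) ω * (F (⟨l, hl⟩, true) ω *
          (Real.sin (Φ k ω) * R k ω * (Real.cos (Φ l ω) * S l ω)))
        - F (⟨k, hk⟩, true) ω * (F (⟨l, hl⟩, false) ω *
          (Real.sin (Φ k ω) * R k ω * (Real.sin (Φ l ω) * S l ω))) := by
      intro ω
      rw [aux_exp_im, aux_exp_re, hkf, hkt, hlf, hlt]
      ring
    -- integrability of the four pieces
    have i1 := hint (⟨k, hk⟩, false) (⟨l, hl⟩, true) _ (CR * CS) hUccM hUccB
    have i2 := hint (⟨k, hk⟩, false) (⟨l, hl⟩, false) _ (CR * CS) hUcsM hUcsB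
    have i3 := hint (⟨k, hk⟩, true) (⟨l, hl⟩, true) _ (CR * CS) hUscM hUscB
    have i4 := hint (⟨k, hk⟩, true) (⟨l, hl⟩, false) _ (CR * CS) hUssM hUssB
    have hswap : ∀ (f g u : Ω → ℝ),
        ∫ ω, f ω * (g ω * u ω) ∂P = ∫ ω, g ω * (f ω * u ω) ∂P :=
      fun f g u => integral_congr_ae (ae_of_all _ fun ω => by ring)
    constructor
    · exact ((((i1.add i2).sub i3).sub i4).congr (ae_of_all _ fun ω => (hXY ω).symm))
    · rw [integral_congr_ae (ae_of_all _ hXY), aux_int4 i1 i2 i3 i4]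
      rcases lt_trichotomy k l with hkl | hkl | hkl
      · -- k < l : isolate the coordinate at index l
        have hne1 : ((⟨k, hk⟩ : Fin m), false) ≠ ((⟨l, hl⟩ : Fin m), true) := fun hc =>
          (Nat.ne_of_lt hkl) (congrArg (fun p : Fin m × Bool => (p.1 : ℕ)) hc)
        have hne2 : ((⟨k, hk⟩ : Fin m), false) ≠ ((⟨l, hl⟩ : Fin m), false) := fun hc =>
          (Nat.ne_of_lt hkl) (congrArg (fun p : Fin m × Bool => (p.1 : ℕ)) hc)
        have hne3 : ((⟨k, hk⟩ : Fin m), true) ≠ ((⟨l, hl⟩ : Fin m), true) := fun hc =>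
          (Nat.ne_of_lt hkl) (congrArg (fun p : Fin m × Bool => (p.1 : ℕ)) hc)
        have hne4 : ((⟨k, hk⟩ : Fin m), true) ≠ ((⟨l, hl⟩ : Fin m), false) := fun hc =>
          (Nat.ne_of_lt hkl) (congrArg (fun p : Fin m × Bool => (p.1 : ℕ)) hc)
        have z1 : ∫ ω, F (⟨k, hk⟩, false) ω * (F (⟨l, hl⟩, true) ω *
            (Real.cos (Φ k ω) * R k ω * (Real.cos (Φ l ω) * S l ω))) ∂P = 0 := by
          rw [hswap]
          exact hzeroL (⟨l, hl⟩, true) (⟨k, hk⟩, false) _ hne1 (hUccq _ (le_of_lt hkl) le_rfl)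
        have z2 : ∫ ω, F (⟨k, hk⟩, false) ω * (F (⟨l, hl⟩, false) ω *
            (Real.cos (Φ k ω) * R k ω * (Real.sin (Φ l ω) * S l ω))) ∂P = 0 := by
          rw [hswap]
          exact hzeroL (⟨l, hl⟩, false) (⟨k, hk⟩, false) _ hne2 (hUcsq _ (le_of_lt hkl) le_rfl)
        have z3 : ∫ ω, F (⟨k, hk⟩, true) ω * (F (⟨l, hl⟩, true) ω *
            (Real.sin (Φ k ω) * R k ω * (Real.cos (Φ l ω) * S l ω))) ∂P = 0 := by
          rw [hswap]
          exact hzeroL (⟨l, hl⟩, true) (⟨k, hk⟩, true) _ hne3 (hUscq _ (le_of_lt hkl) le_rfl)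
        have z4 : ∫ ω, F (⟨k, hk⟩, true) ω * (F (⟨l, hl⟩, false) ω *
            (Real.sin (Φ k ω) * R k ω * (Real.sin (Φ l ω) * S l ω))) ∂P = 0 := by
          rw [hswap]
          exact hzeroL (⟨l, hl⟩, false) (⟨k, hk⟩, true) _ hne4 (hUssq _ (le_of_lt hkl) le_rfl)
        rw [z1, z2, z3, z4]
        ring
      · -- k = l : the two diagonal terms cancel
        subst hkl
        rw [show (⟨k, hl⟩ : Fin m) = ⟨k, hk⟩ from rfl]
        have hne1 : ((⟨k, hk⟩ : Fin m), true) ≠ ((⟨k, hk⟩ : Fin m), false) := by simp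
        have hne2 : ((⟨k, hk⟩ : Fin m), false) ≠ ((⟨k, hk⟩ : Fin m), true) := by simp
        have z1 : ∫ ω, F (⟨k, hk⟩, false) ω * (F (⟨k, hk⟩, true) ω *
            (Real.cos (Φ k ω) * R k ω * (Real.cos (Φ k ω) * S k ω))) ∂P = 0 :=
          hzeroL (⟨k, hk⟩, false) (⟨k, hk⟩, true) _ hne1 (hUccq _ le_rfl le_rfl)
        have z4 : ∫ ω, F (⟨k, hk⟩, true) ω * (F (⟨k, hk⟩, false) ω *
            (Real.sin (Φ k ω) * R k ω * (Real.sin (Φ k ω) * S k ω))) ∂P = 0 :=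
          hzeroL (⟨k, hk⟩, true) (⟨k, hk⟩, false) _ hne2 (hUssq _ le_rfl le_rfl)
        have z2 := hdiag (⟨k, hk⟩, false)
          (fun ω => Real.cos (Φ k ω) * R k ω * (Real.sin (Φ k ω) * S k ω))
          (hUcsq _ le_rfl le_rfl)
        have z3 := hdiag (⟨k, hk⟩, true)
          (fun ω => Real.sin (Φ k ω) * R k ω * (Real.cos (Φ k ω) * S k ω))
          (hUscq _ le_rfl le_rfl)
        have hUe : ∫ ω, Real.cos (Φ k ω) * R k ω * (Real.sin (Φ k ω) * S k ω) ∂P =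
            ∫ ω, Real.sin (Φ k ω) * R k ω * (Real.cos (Φ k ω) * S k ω) ∂P :=
          integral_congr_ae (ae_of_all _ fun ω => by ring)
        rw [z1, z2, z3, z4, hUe]
        ring
      · -- l < k : isolate the coordinate at index k
        have hne1 : ((⟨l, hl⟩ : Fin m), true) ≠ ((⟨k, hk⟩ : Fin m), false) := fun hc =>
          (Nat.ne_of_lt hkl) (congrArg (fun p : Fin m × Bool => (p.1 : ℕ)) hc)
        have hne2 : ((⟨l, hl⟩ : Fin m), false) ≠ ((⟨k, hk⟩ : Fin m), false) := fun hc =>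
          (Nat.ne_of_lt hkl) (congrArg (fun p : Fin m × Bool => (p.1 : ℕ)) hc)
        have hne3 : ((⟨l, hl⟩ : Fin m), true) ≠ ((⟨k, hk⟩ : Fin m), true) := fun hc =>
          (Nat.ne_of_lt hkl) (congrArg (fun p : Fin m × Bool => (p.1 : ℕ)) hc)
        have hne4 : ((⟨l, hl⟩ : Fin m), false) ≠ ((⟨k, hk⟩ : Fin m), true) := fun hc =>
          (Nat.ne_of_lt hkl) (congrArg (fun p : Fin m × Bool => (p.1 : ℕ)) hc)
        have z1 := hzeroL (⟨k, hk⟩, false) (⟨l, hl⟩, true) _ hne1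
          (hUccq (⟨k, hk⟩, false) le_rfl (le_of_lt hkl))
        have z2 := hzeroL (⟨k, hk⟩, false) (⟨l, hl⟩, false) _ hne2
          (hUcsq (⟨k, hk⟩, false) le_rfl (le_of_lt hkl))
        have z3 := hzeroL (⟨k, hk⟩, true) (⟨l, hl⟩, true) _ hne3
          (hUscq (⟨k, hk⟩, true) le_rfl (le_of_lt hkl))
        have z4 := hzeroL (⟨k, hk⟩, true) (⟨l, hl⟩, false) _ hne4
          (hUssq (⟨k, hk⟩, true) le_rfl (le_of_lt hkl))
        rw [z1, z2, z3, z4]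
        ring
  -- assembly
  have hsum : ∀ ω, A m ω * B m ω = ∑ k ∈ Finset.range m, ∑ l ∈ Finset.range m,
      ((Complex.exp (-(Φ k ω : ℂ) * Complex.I) * G k ω).im * R k ω) *
      ((Complex.exp (-(Φ l ω : ℂ) * Complex.I) * G l ω).re * S l ω) := by
    intro ω
    rw [hA, hB, Finset.sum_mul_sum]
  rw [integral_congr_ae (ae_of_all _ hsum),
    integral_finset_sum _ (fun k hk => integrable_finset_sum _ fun l hl =>
      (hpair k l (Finset.mem_range.mp hk) (Finset.mem_range.mp hl)).1)]
  refine Finset.sum_eq_zero fun k hk => ?_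
  rw [integral_finset_sum _ (fun l hl =>
    (hpair k l (Finset.mem_range.mp hk) (Finset.mem_range.mp hl)).1)]
  exact Finset.sum_eq_zero fun l hl =>
    (hpair k l (Finset.mem_range.mp hk) (Finset.mem_range.mp hl)).2
end

section
/- In the discrete Itô setting (see context), for all 0 ≤ n ≤ m the partial sums satisfy the three increment-orthogonality identities: (1) E[A_n² · B_n · (B_m − B_n)] = 0; (2) E[A_n · B_n² · (A_m − A_n)] = 0; and (3) E[A_n · B_n · (A_m − A_n) · (B_m − B_n)] = 0. -/
open MeasureTheory ProbabilityTheory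
open scoped NNReal ENNReal

section DitoHelpers

lemma dito_exp_mul_im (φ : ℝ) (z : ℂ) :
    (Complex.exp (-(φ:ℂ) * Complex.I) * z).im
      = Real.cos φ * z.im - Real.sin φ * z.re := by
  have h : -(φ:ℂ) = ((-φ : ℝ) : ℂ) := by push_cast; ring
  rw [h, Complex.mul_im, Complex.exp_ofReal_mul_I_re, Complex.exp_ofReal_mul_I_im,
    Real.cos_neg, Real.sin_neg]
  ring

lemma dito_exp_mul_re (φ : ℝ) (z : ℂ) :
    (Complex.exp (-(φ:ℂ) * Complex.I) * z).re
      = Real.cos φ * z.re + Real.sin φ * z.im := by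
  have h : -(φ:ℂ) = ((-φ : ℝ) : ℂ) := by push_cast; ring
  rw [h, Complex.mul_re, Complex.exp_ofReal_mul_I_re, Complex.exp_ofReal_mul_I_im,
    Real.cos_neg, Real.sin_neg]
  ring

lemma dito_gauss_int4 {v : ℝ≥0} (hv : v ≠ 0) :
    Integrable (fun x : ℝ => x ^ (4:ℕ)) (gaussianReal 0 v) := by
  rw [gaussianReal_of_var_ne_zero _ hv]
  rw [ProbabilityTheory.gaussianPDF_def]
  rw [integrable_withDensity_iff ((measurable_gaussianPDFReal 0 v).ennreal_ofReal)
    (by simp [ENNReal.ofReal_lt_top])]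
  have hb : (0:ℝ) < ((2:ℝ) * v)⁻¹ := by positivity
  have h := integrable_rpow_mul_exp_neg_mul_sq hb (s := (4:ℝ)) (by norm_num)
  simp only [show ((4:ℝ)) = ((4:ℕ):ℝ) from by norm_num, Real.rpow_natCast] at h
  have h2 := (h.const_mul ((Real.sqrt (2 * Real.pi * v))⁻¹))
  apply h2.congr
  filter_upwards with x
  rw [ENNReal.toReal_ofReal (gaussianPDFReal_nonneg _ _ _)]
  rw [gaussianPDFReal_def]
  have : -((2:ℝ) * ↑v)⁻¹ * x ^ 2 = -(x - 0) ^ 2 / (2 * ↑v) := by ring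
  rw [this]; push_cast; ring

lemma dito_gauss_mem4 {v : ℝ≥0} (hv : v ≠ 0) : MemLp (id : ℝ → ℝ) 4 (gaussianReal 0 v) := by
  rw [← memLp_norm_rpow_iff (q := 4) aestronglyMeasurable_id (by norm_num) (by norm_num)]
  have h4 : ((4:ℝ≥0∞)/4) = 1 := by
    rw [ENNReal.div_eq_one_iff] <;> norm_num
  rw [h4, memLp_one_iff_integrable]
  have : (fun x : ℝ => ‖id x‖ ^ (4:ℝ≥0∞).toReal) = fun x : ℝ => x ^ (4:ℕ) := by
    funext x
    have : ((4:ℝ≥0∞)).toReal = ((4:ℕ):ℝ) := by simp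
    rw [this, Real.rpow_natCast]
    simpa using (Even.pow_abs (by decide : Even 4) x)
  rw [this]; exact dito_gauss_int4 hv

lemma dito_gauss_mean {v : ℝ≥0} : ∫ x, x ∂(gaussianReal 0 v) = 0 := by
  by_cases hv : v = 0
  · simp [hv, gaussianReal_zero_var]
  have hmap : (gaussianReal 0 v).map (fun x => (-1 : ℝ) * x) = gaussianReal 0 v := by
    have := gaussianReal_map_const_mul (μ := 0) (v := v) (-1)
    simpa using this
  have hint : Integrable (fun x : ℝ => x) (gaussianReal 0 v) := by
    have h4 := dito_gauss_mem4 (v := v) hv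
    exact (h4.mono_exponent (by norm_num)).integrable le_rfl
  have : ∫ x, x ∂(gaussianReal 0 v) = ∫ x, (-1 : ℝ) * x ∂(gaussianReal 0 v) := by
    conv_lhs => rw [← hmap]
    rw [integral_map (f := fun x : ℝ => x) (by fun_prop) measurable_id.aestronglyMeasurable]
  simp only [neg_one_mul] at this
  rw [integral_neg] at this
  linarith

lemma dito_key_indep {Ω : Type*} [MeasurableSpace Ω] {P : Measure Ω} [IsProbabilityMeasure P]
    {ι : Type*} {X : ι → Ω → ℝ} (hXm : ∀ i, Measurable (X i))
    (hindep : iIndepFun (m := fun _ : ι => (inferInstance : MeasurableSpace ℝ)) X P)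
    (q : ι) {W : Ω → ℝ}
    (hW : Measurable[⨆ i ∈ ({q}ᶜ : Set ι), MeasurableSpace.comap (X i) inferInstance] W) :
    IndepFun W (X q) P := by
  have h := indep_biSup_compl (fun i => (hXm i).comap_le) hindep.iIndep ({q}ᶜ : Set ι)
  rw [compl_compl] at h
  have h2 : Indep (⨆ i ∈ ({q}ᶜ : Set ι), MeasurableSpace.comap (X i) inferInstance)
      (MeasurableSpace.comap (X q) inferInstance) P := by
    refine indep_of_indep_of_le_right h ?_
    simp
  exact indep_of_indep_of_le_left h2 (measurable_iff_comap_le.mp hW)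

lemma dito_key_zero {Ω : Type*} [MeasurableSpace Ω] {P : Measure Ω} [IsProbabilityMeasure P]
    {ι : Type*} {X : ι → Ω → ℝ} {v : ℝ≥0} (hv : v ≠ 0)
    (hXm : ∀ i, Measurable (X i))
    (hindep : iIndepFun (m := fun _ : ι => (inferInstance : MeasurableSpace ℝ)) X P)
    (hlaw : ∀ i, P.map (X i) = gaussianReal 0 v)
    (q : ι) {W : Ω → ℝ}
    (hW : Measurable[⨆ i ∈ ({q}ᶜ : Set ι), MeasurableSpace.comap (X i) inferInstance] W)
    (hWint : Integrable W P)
    (hprod : Integrable (fun ω => W ω * X q ω) P) :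
    ∫ ω, W ω * X q ω ∂P = 0 := by
  have hXint : Integrable (X q) P := by
    have h4 := dito_gauss_mem4 hv
    rw [← hlaw q] at h4
    exact MemLp.integrable (by norm_num) (h4.comp_of_map (hXm q).aemeasurable)
  have hmean : ∫ ω, X q ω ∂P = 0 := by
    have h := integral_map (μ := P) (hXm q).aemeasurable (f := fun x : ℝ => x)
      measurable_id.aestronglyMeasurable
    rw [hlaw q, dito_gauss_mean] at h
    exact h.symm
  have h := (dito_key_indep hXm hindep q hW).integral_fun_mul_eq_mul_integral hWint.1 hXint.1
  calc ∫ ω, W ω * X q ω ∂P = (∫ ω, W ω ∂P) * ∫ ω, X q ω ∂P := h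
    _ = 0 := by rw [hmean, mul_zero]

lemma dito_key_sq {Ω : Type*} [MeasurableSpace Ω] {P : Measure Ω} [IsProbabilityMeasure P]
    {ι : Type*} {X : ι → Ω → ℝ} {v : ℝ≥0} (hv : v ≠ 0)
    (hXm : ∀ i, Measurable (X i))
    (hindep : iIndepFun (m := fun _ : ι => (inferInstance : MeasurableSpace ℝ)) X P)
    (hlaw : ∀ i, P.map (X i) = gaussianReal 0 v)
    (q : ι) {W : Ω → ℝ}
    (hW : Measurable[⨆ i ∈ ({q}ᶜ : Set ι), MeasurableSpace.comap (X i) inferInstance] W)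
    (hWint : Integrable W P) :
    ∫ ω, W ω * (X q ω)^2 ∂P = (∫ ω, W ω ∂P) * ∫ x, x^2 ∂(gaussianReal 0 v) := by
  have hXsq : Integrable (fun ω => (X q ω)^2) P := by
    have h4 := dito_gauss_mem4 hv
    rw [← hlaw q] at h4
    have h2 : MemLp (X q) 2 P :=
      (h4.comp_of_map (hXm q).aemeasurable).mono_exponent (by norm_num)
    exact h2.integrable_sq
  have hind : IndepFun W (fun ω => (X q ω)^2) P := by
    have h := (dito_key_indep hXm hindep q hW).comp measurable_id
      ((measurable_id.pow_const 2) : Measurable fun x : ℝ => x ^ 2)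
    exact h
  have hmul := hind.integral_fun_mul_eq_mul_integral hWint.1 hXsq.1
  have hmul2 : ∫ ω, W ω * (X q ω)^2 ∂P = (∫ ω, W ω ∂P) * ∫ ω, (X q ω)^2 ∂P := hmul
  rw [hmul2]
  congr 1
  have h := integral_map (μ := P) (hXm q).aemeasurable (f := fun x : ℝ => x^2)
    (measurable_id.pow_const 2).aestronglyMeasurable
  rw [hlaw q] at h
  exact h.symm

end DitoHelpers

/-- Discrete analogue of Lemma 1, part 1 of the paper: in the discrete Itô setting, for all
`n ≤ m` the partial sums satisfy the three increment-orthogonality identities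
`E[A_n² B_n (B_m - B_n)] = 0`, `E[A_n B_n² (A_m - A_n)] = 0` and
`E[A_n B_n (A_m - A_n)(B_m - B_n)] = 0`. -/
theorem discrete_ito_increment_orthogonality
    {Ω : Type*} [MeasurableSpace Ω] (P : Measure Ω) [IsProbabilityMeasure P]
    (m : ℕ) (v : ℝ≥0) (hv : 0 < v)
    (G : ℕ → Ω → ℂ) (hGmeas : ∀ k, Measurable (G k))
    (hindep : iIndepFun (m := fun _ : Fin m × Bool => (inferInstance : MeasurableSpace ℝ))
      (fun p : Fin m × Bool => fun ω => if p.2 then (G p.1 ω).re else (G p.1 ω).im) P)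
    (hlaw : ∀ p : Fin m × Bool,
      P.map (fun ω => if p.2 then (G p.1 ω).re else (G p.1 ω).im) = gaussianReal 0 v)
    (𝓕 : ℕ → MeasurableSpace Ω)
    (h𝓕 : ∀ k, 𝓕 k = ⨆ j ∈ Finset.range k,
      MeasurableSpace.comap (G j) (inferInstance : MeasurableSpace ℂ))
    (Φ R S : ℕ → Ω → ℝ)
    (hΦmeas : ∀ k < m, Measurable[𝓕 k] (Φ k))
    (hRmeas : ∀ k < m, Measurable[𝓕 k] (R k))
    (hSmeas : ∀ k < m, Measurable[𝓕 k] (S k))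
    (hΦbdd : ∀ k < m, ∃ C : ℝ, ∀ᵐ ω ∂P, |Φ k ω| ≤ C)
    (hRbdd : ∀ k < m, ∃ C : ℝ, ∀ᵐ ω ∂P, |R k ω| ≤ C)
    (hSbdd : ∀ k < m, ∃ C : ℝ, ∀ᵐ ω ∂P, |S k ω| ≤ C)
    (A B : ℕ → Ω → ℝ)
    (hA : ∀ n ω, A n ω =
      ∑ k ∈ Finset.range n, (Complex.exp (-(Φ k ω : ℂ) * Complex.I) * G k ω).im * R k ω)
    (hB : ∀ n ω, B n ω =
      ∑ k ∈ Finset.range n, (Complex.exp (-(Φ k ω : ℂ) * Complex.I) * G k ω).re * S k ω) :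
    ∀ n ≤ m,
      (∫ ω, (A n ω) ^ 2 * B n ω * (B m ω - B n ω) ∂P = 0) ∧
      (∫ ω, A n ω * (B n ω) ^ 2 * (A m ω - A n ω) ∂P = 0) ∧
      (∫ ω, A n ω * B n ω * (A m ω - A n ω) * (B m ω - B n ω) ∂P = 0) := by
  -- basic measurability
  have hFle : ∀ k, 𝓕 k ≤ (inferInstance : MeasurableSpace Ω) := by
    intro k; rw [h𝓕 k]
    exact iSup_le fun j => iSup_le fun _ => measurable_iff_comap_le.mp (hGmeas j)
  have hΦm : ∀ k, k < m → Measurable (Φ k) := fun k hk => (hΦmeas k hk).mono (hFle k) le_rfl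
  have hRm : ∀ k, k < m → Measurable (R k) := fun k hk => (hRmeas k hk).mono (hFle k) le_rfl
  have hSm : ∀ k, k < m → Measurable (S k) := fun k hk => (hSmeas k hk).mono (hFle k) le_rfl
  have hXm : ∀ p : Fin m × Bool,
      Measurable (fun ω => if p.2 then (G p.1 ω).re else (G p.1 ω).im) := by
    rintro ⟨i, b⟩; cases b
    · exact Complex.measurable_im.comp (hGmeas i)
    · exact Complex.measurable_re.comp (hGmeas i)
  -- the elementary fields
  obtain ⟨f, hfdef⟩ : ∃ f : ℕ → Ω → ℝ, f = fun k ω =>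
      (Real.cos (Φ k ω) * (G k ω).im - Real.sin (Φ k ω) * (G k ω).re) * R k ω := ⟨_, rfl⟩
  obtain ⟨g, hgdef⟩ : ∃ g : ℕ → Ω → ℝ, g = fun k ω =>
      (Real.cos (Φ k ω) * (G k ω).re + Real.sin (Φ k ω) * (G k ω).im) * S k ω := ⟨_, rfl⟩
  have hAf : ∀ t ω, A t ω = ∑ k ∈ Finset.range t, f k ω := by
    intro t ω; rw [hA]
    refine Finset.sum_congr rfl fun k _ => ?_
    rw [dito_exp_mul_im, hfdef]
  have hBg : ∀ t ω, B t ω = ∑ k ∈ Finset.range t, g k ω := by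
    intro t ω; rw [hB]
    refine Finset.sum_congr rfl fun k _ => ?_
    rw [dito_exp_mul_re, hgdef]
  -- MemLp infrastructure
  have hX4 : ∀ p : Fin m × Bool,
      MemLp (fun ω => if p.2 then (G p.1 ω).re else (G p.1 ω).im) 4 P := by
    intro p
    have h4 := dito_gauss_mem4 (v := v) hv.ne'
    rw [← hlaw p] at h4
    exact h4.comp_of_map (hXm p).aemeasurable
  have hre4 : ∀ k, ∀ hk : k < m, MemLp (fun ω => (G k ω).re) 4 P :=
    fun k hk => hX4 (⟨k, hk⟩, true)
  have him4 : ∀ k, ∀ hk : k < m, MemLp (fun ω => (G k ω).im) 4 P :=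
    fun k hk => hX4 (⟨k, hk⟩, false)
  have hmemEq : ∀ {u w : Ω → ℝ} {p : ENNReal}, MemLp u p P → (∀ ω, u ω = w ω) → MemLp w p P :=
    fun h e => (funext e) ▸ h
  have hmul2 : ∀ {u w : Ω → ℝ}, MemLp u 4 P → MemLp w 4 P →
      MemLp (fun ω => u ω * w ω) 2 P := by
    intro u w hu hw
    have h := MemLp.smul (r := 2) hw hu (hpqr := ⟨by
        rw [← two_mul, show (4:ℝ≥0∞) = 2 * 2 by norm_num, ENNReal.mul_inv (by simp) (by simp),
          ← mul_assoc, ENNReal.mul_inv_cancel (by simp) (by simp), one_mul]⟩)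
    exact hmemEq h (fun ω => rfl)
  have hint2 : ∀ {u w : Ω → ℝ}, MemLp u 2 P → MemLp w 2 P →
      Integrable (fun ω => u ω * w ω) P := by
    intro u w hu hw
    have h := MemLp.smul (r := 1) hw hu (hpqr := ⟨by rw [ENNReal.inv_two_add_inv_two, inv_one]⟩)
    exact memLp_one_iff_integrable.mp (hmemEq h (fun ω => rfl))
  have hint4 : ∀ (u w z t : Ω → ℝ), MemLp u 4 P → MemLp w 4 P → MemLp z 4 P → MemLp t 4 P →
      ∀ {F : Ω → ℝ}, (∀ ω, F ω = u ω * w ω * z ω * t ω) → Integrable F P := by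
    intro u w z t hu hw hz ht F hF
    have h := hint2 (hmul2 hu hw) (hmul2 hz ht)
    exact h.congr (Filter.Eventually.of_forall fun ω => by rw [hF ω]; ring)
  have hbddT : ∀ (h : Ω → ℝ) (C : ℝ), Measurable h → (∀ᵐ ω ∂P, |h ω| ≤ C) → MemLp h ⊤ P :=
    fun h C hm hb => memLp_top_of_bound hm.aestronglyMeasurable C
      (by simpa [Real.norm_eq_abs] using hb)
  have hmulT : ∀ {u φ : Ω → ℝ}, MemLp u 4 P → MemLp φ ⊤ P →
      MemLp (fun ω => φ ω * u ω) 4 P := by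
    intro u φ hu hφ
    exact hmemEq (hu.smul hφ) (fun ω => rfl)
  have hmulTT : ∀ {φ ψ : Ω → ℝ}, MemLp φ ⊤ P → MemLp ψ ⊤ P →
      MemLp (fun ω => φ ω * ψ ω) ⊤ P := by
    intro φ ψ hφ hψ
    exact hmemEq (MemLp.smul (r := ⊤) hψ hφ) (fun ω => rfl)
  have hT4 : ∀ {φ : Ω → ℝ}, MemLp φ ⊤ P → MemLp φ 4 P :=
    fun h => h.mono_exponent le_top
  have hcosT : ∀ k, k < m → MemLp (fun ω => Real.cos (Φ k ω)) ⊤ P := fun k hk =>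
    hbddT _ 1 (Real.measurable_cos.comp (hΦm k hk))
      (Filter.Eventually.of_forall fun ω => Real.abs_cos_le_one _)
  have hsinT : ∀ k, k < m → MemLp (fun ω => Real.sin (Φ k ω)) ⊤ P := fun k hk =>
    hbddT _ 1 (Real.measurable_sin.comp (hΦm k hk))
      (Filter.Eventually.of_forall fun ω => Real.abs_sin_le_one _)
  have hRT : ∀ k, k < m → MemLp (R k) ⊤ P := fun k hk => by
    obtain ⟨C, hC⟩ := hRbdd k hk
    exact hbddT _ C (hRm k hk) hC
  have hST : ∀ k, k < m → MemLp (S k) ⊤ P := fun k hk => by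
    obtain ⟨C, hC⟩ := hSbdd k hk
    exact hbddT _ C (hSm k hk) hC
  have hf4 : ∀ k, k < m → MemLp (f k) 4 P := by
    intro k hk
    have h1 : MemLp (fun ω => Real.cos (Φ k ω) * (G k ω).im) 4 P :=
      hmulT (him4 k hk) (hcosT k hk)
    have h2 : MemLp (fun ω => Real.sin (Φ k ω) * (G k ω).re) 4 P :=
      hmulT (hre4 k hk) (hsinT k hk)
    have hD : MemLp (fun ω => Real.cos (Φ k ω) * (G k ω).im
        - Real.sin (Φ k ω) * (G k ω).re) 4 P := hmemEq (h1.sub h2) (fun ω => rfl)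
    exact hmemEq (hmulT hD (hRT k hk)) (fun ω => by rw [hfdef]; ring)
  have hg4 : ∀ k, k < m → MemLp (g k) 4 P := by
    intro k hk
    have h1 : MemLp (fun ω => Real.cos (Φ k ω) * (G k ω).re) 4 P :=
      hmulT (hre4 k hk) (hcosT k hk)
    have h2 : MemLp (fun ω => Real.sin (Φ k ω) * (G k ω).im) 4 P :=
      hmulT (him4 k hk) (hsinT k hk)
    have hD : MemLp (fun ω => Real.cos (Φ k ω) * (G k ω).re
        + Real.sin (Φ k ω) * (G k ω).im) 4 P := hmemEq (h1.add h2) (fun ω => rfl)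
    exact hmemEq (hmulT hD (hST k hk)) (fun ω => by rw [hgdef]; ring)
  have hA4 : ∀ t, t ≤ m → MemLp (A t) 4 P := by
    intro t ht
    have he : A t = fun ω => ∑ k ∈ Finset.range t, f k ω := funext (hAf t)
    rw [he]
    have h := memLp_finset_sum' (μ := P) (p := 4) (Finset.range t) (f := fun k => f k)
      (fun k hk => hf4 k (lt_of_lt_of_le (Finset.mem_range.mp hk) ht))
    exact hmemEq h (fun ω => by simp)
  have hB4 : ∀ t, t ≤ m → MemLp (B t) 4 P := by
    intro t ht
    have he : B t = fun ω => ∑ k ∈ Finset.range t, g k ω := funext (hBg t)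
    rw [he]
    have h := memLp_finset_sum' (μ := P) (p := 4) (Finset.range t) (f := fun k => g k)
      (fun k hk => hg4 k (lt_of_lt_of_le (Finset.mem_range.mp hk) ht))
    exact hmemEq h (fun ω => by simp)
  -- σ-algebra N q : everything except component q
  obtain ⟨N, hN⟩ : ∃ N : Fin m × Bool → MeasurableSpace Ω, N = fun q =>
      ⨆ p ∈ ({q}ᶜ : Set (Fin m × Bool)),
        MeasurableSpace.comap (fun ω => if p.2 then (G p.1 ω).re else (G p.1 ω).im)
          inferInstance := ⟨_, rfl⟩
  have hXleN : ∀ (q p : Fin m × Bool), p ≠ q →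
      Measurable[N q] (fun ω => if p.2 then (G p.1 ω).re else (G p.1 ω).im) := by
    intro q p hpq
    rw [measurable_iff_comap_le, hN]
    exact le_biSup
      (fun p : Fin m × Bool => MeasurableSpace.comap
        (fun ω => if p.2 then (G p.1 ω).re else (G p.1 ω).im)
        (inferInstance : MeasurableSpace ℝ))
      (Set.mem_compl_singleton_iff.mpr hpq)
  have hGNle : ∀ (q : Fin m × Bool) (j : ℕ) (hj : j < m), j ≠ (q.1 : ℕ) →
      Measurable[N q] (G j) := by
    intro q j hj hne
    have hre : Measurable[N q] fun ω => (G j ω).re := by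
      refine hXleN q (⟨j, hj⟩, true) ?_
      intro h; subst h; exact hne rfl
    have him : Measurable[N q] fun ω => (G j ω).im := by
      refine hXleN q (⟨j, hj⟩, false) ?_
      intro h; subst h; exact hne rfl
    have hfun : (fun ω => ((G j ω).re : ℂ) + ((G j ω).im : ℂ) * Complex.I) = G j :=
      funext fun ω => Complex.re_add_im _
    rw [← hfun]
    exact (Complex.measurable_ofReal.comp hre).add
      ((Complex.measurable_ofReal.comp him).mul measurable_const)
  have hFNle : ∀ (q : Fin m × Bool) (k : ℕ), k ≤ (q.1 : ℕ) → 𝓕 k ≤ N q := by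
    intro q k hk
    rw [h𝓕 k]
    refine iSup_le fun j => iSup_le fun hj => ?_
    have hjk : j < k := Finset.mem_range.mp hj
    have hjq : j < (q.1 : ℕ) := lt_of_lt_of_le hjk hk
    exact measurable_iff_comap_le.mp (hGNle q j (lt_trans hjq q.1.isLt) (Nat.ne_of_lt hjq))
  have hΦN : ∀ (q : Fin m × Bool) (k : ℕ), k ≤ (q.1 : ℕ) → Measurable[N q] (Φ k) :=
    fun q k hk => (hΦmeas k (lt_of_le_of_lt hk q.1.isLt)).mono (hFNle q k hk) le_rfl
  have hRN : ∀ (q : Fin m × Bool) (k : ℕ), k ≤ (q.1 : ℕ) → Measurable[N q] (R k) :=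
    fun q k hk => (hRmeas k (lt_of_le_of_lt hk q.1.isLt)).mono (hFNle q k hk) le_rfl
  have hSN : ∀ (q : Fin m × Bool) (k : ℕ), k ≤ (q.1 : ℕ) → Measurable[N q] (S k) :=
    fun q k hk => (hSmeas k (lt_of_le_of_lt hk q.1.isLt)).mono (hFNle q k hk) le_rfl
  have hfN : ∀ (q : Fin m × Bool) (k : ℕ), k < (q.1 : ℕ) → Measurable[N q] (f k) := by
    intro q k hk
    have hkm : k < m := lt_trans hk q.1.isLt
    have hG := hGNle q k hkm (Nat.ne_of_lt hk)
    rw [hfdef]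
    exact (((Real.measurable_cos.comp (hΦN q k hk.le)).mul
      (Complex.measurable_im.comp hG)).sub
      ((Real.measurable_sin.comp (hΦN q k hk.le)).mul
      (Complex.measurable_re.comp hG))).mul (hRN q k hk.le)
  have hgN : ∀ (q : Fin m × Bool) (k : ℕ), k < (q.1 : ℕ) → Measurable[N q] (g k) := by
    intro q k hk
    have hkm : k < m := lt_trans hk q.1.isLt
    have hG := hGNle q k hkm (Nat.ne_of_lt hk)
    rw [hgdef]
    exact (((Real.measurable_cos.comp (hΦN q k hk.le)).mul
      (Complex.measurable_re.comp hG)).add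
      ((Real.measurable_sin.comp (hΦN q k hk.le)).mul
      (Complex.measurable_im.comp hG))).mul (hSN q k hk.le)
  have hAN : ∀ (q : Fin m × Bool) (t : ℕ), t ≤ (q.1 : ℕ) → Measurable[N q] (A t) := by
    intro q t ht
    have he : A t = fun ω => ∑ k ∈ Finset.range t, f k ω := funext (hAf t)
    rw [he]
    exact Finset.measurable_sum _ (fun k hk => hfN q k (lt_of_lt_of_le (Finset.mem_range.mp hk) ht))
  have hBN : ∀ (q : Fin m × Bool) (t : ℕ), t ≤ (q.1 : ℕ) → Measurable[N q] (B t) := by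
    intro q t ht
    have he : B t = fun ω => ∑ k ∈ Finset.range t, g k ω := funext (hBg t)
    rw [he]
    exact Finset.measurable_sum _ (fun k hk => hgN q k (lt_of_lt_of_le (Finset.mem_range.mp hk) ht))
  have hreN : ∀ (k : ℕ) (hk : k < m),
      Measurable[N (⟨k, hk⟩, false)] (fun ω => (G k ω).re) :=
    fun k hk => hXleN (⟨k, hk⟩, false) (⟨k, hk⟩, true) (by simp)
  have himN : ∀ (k : ℕ) (hk : k < m),
      Measurable[N (⟨k, hk⟩, true)] (fun ω => (G k ω).im) :=
    fun k hk => hXleN (⟨k, hk⟩, true) (⟨k, hk⟩, false) (by simp)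
  -- the key vanishing lemmas, specialized
  have kzre : ∀ (k : ℕ) (hk : k < m) (W : Ω → ℝ), Measurable[N (⟨k, hk⟩, true)] W →
      Integrable W P → Integrable (fun ω => W ω * (G k ω).re) P →
      ∫ ω, W ω * (G k ω).re ∂P = 0 := by
    intro k hk W hWm hWi hprod
    rw [hN] at hWm
    have h := dito_key_zero hv.ne' hXm hindep hlaw (⟨k, hk⟩, true) hWm hWi
      (by simpa using hprod)
    simpa using h
  have kzim : ∀ (k : ℕ) (hk : k < m) (W : Ω → ℝ), Measurable[N (⟨k, hk⟩, false)] W →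
      Integrable W P → Integrable (fun ω => W ω * (G k ω).im) P →
      ∫ ω, W ω * (G k ω).im ∂P = 0 := by
    intro k hk W hWm hWi hprod
    rw [hN] at hWm
    have h := dito_key_zero hv.ne' hXm hindep hlaw (⟨k, hk⟩, false) hWm hWi
      (by simpa using hprod)
    simpa using h
  have kzsq : ∀ (k : ℕ) (hk : k < m) (W : Ω → ℝ), Measurable[N (⟨k, hk⟩, true)] W →
      Measurable[N (⟨k, hk⟩, false)] W → Integrable W P →
      ∫ ω, W ω * (G k ω).im ^ 2 ∂P = ∫ ω, W ω * (G k ω).re ^ 2 ∂P := by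
    intro k hk W hWmt hWmf hWi
    rw [hN] at hWmt hWmf
    have h1 := dito_key_sq hv.ne' hXm hindep hlaw (⟨k, hk⟩, false) hWmf hWi
    have h2 := dito_key_sq hv.ne' hXm hindep hlaw (⟨k, hk⟩, true) hWmt hWi
    simp only [] at h1 h2
    exact h1.trans h2.symm
  -- main proof
  intro n hn
  have hA4n := hA4 n hn
  have hB4n := hB4 n hn
  have hf_sum : ∀ ω, A m ω - A n ω = ∑ k ∈ Finset.Ico n m, f k ω := by
    intro ω; rw [hAf m, hAf n]
    exact (Finset.sum_Ico_eq_sub _ hn).symm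
  have hg_sum : ∀ ω, B m ω - B n ω = ∑ k ∈ Finset.Ico n m, g k ω := by
    intro ω; rw [hBg m, hBg n]
    exact (Finset.sum_Ico_eq_sub _ hn).symm
  refine ⟨?_, ?_, ?_⟩
  · -- (1) E[A_n² B_n (B_m - B_n)] = 0
    have heq : (fun ω => A n ω ^ 2 * B n ω * (B m ω - B n ω))
        = fun ω => ∑ k ∈ Finset.Ico n m, A n ω ^ 2 * B n ω * g k ω := by
      funext ω; rw [hg_sum ω, Finset.mul_sum]
    have hterm : ∀ k ∈ Finset.Ico n m, Integrable (fun ω => A n ω ^ 2 * B n ω * g k ω) P := by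
      intro k hk
      obtain ⟨hk1, hk2⟩ := Finset.mem_Ico.mp hk
      exact hint4 (A n) (A n) (B n) (g k) hA4n hA4n hB4n (hg4 k hk2) (fun ω => by ring)
    rw [heq, integral_finset_sum _ hterm]
    refine Finset.sum_eq_zero fun k hk => ?_
    obtain ⟨hk1, hk2⟩ := Finset.mem_Ico.mp hk
    have hsplit : (fun ω => A n ω ^ 2 * B n ω * g k ω)
        = fun ω => (fun ω => A n ω * A n ω * B n ω * (Real.cos (Φ k ω) * S k ω)) ω * (G k ω).re
          + (fun ω => A n ω * A n ω * B n ω * (Real.sin (Φ k ω) * S k ω)) ω * (G k ω).im := by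
      funext ω; rw [hgdef]; ring
    have hWc : Measurable[N (⟨k, hk2⟩, true)]
        (fun ω => A n ω * A n ω * B n ω * (Real.cos (Φ k ω) * S k ω)) := by
      have hA := hAN (⟨k, hk2⟩, true) n hk1
      have hB := hBN (⟨k, hk2⟩, true) n hk1
      exact ((hA.mul hA).mul hB).mul
        ((Real.measurable_cos.comp (hΦN _ k le_rfl)).mul (hSN _ k le_rfl))
    have hWs : Measurable[N (⟨k, hk2⟩, false)]
        (fun ω => A n ω * A n ω * B n ω * (Real.sin (Φ k ω) * S k ω)) := by
      have hA := hAN (⟨k, hk2⟩, false) n hk1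
      have hB := hBN (⟨k, hk2⟩, false) n hk1
      exact ((hA.mul hA).mul hB).mul
        ((Real.measurable_sin.comp (hΦN _ k le_rfl)).mul (hSN _ k le_rfl))
    have hcS4 := hT4 (hmulTT (hcosT k hk2) (hST k hk2))
    have hsS4 := hT4 (hmulTT (hsinT k hk2) (hST k hk2))
    have hWcint : Integrable (fun ω => A n ω * A n ω * B n ω
        * (Real.cos (Φ k ω) * S k ω)) P :=
      hint4 (A n) (A n) (B n) _ hA4n hA4n hB4n hcS4 (fun ω => rfl)
    have hWsint : Integrable (fun ω => A n ω * A n ω * B n ω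
        * (Real.sin (Φ k ω) * S k ω)) P :=
      hint4 (A n) (A n) (B n) _ hA4n hA4n hB4n hsS4 (fun ω => rfl)
    have hWcre : Integrable (fun ω => (A n ω * A n ω * B n ω
        * (Real.cos (Φ k ω) * S k ω)) * (G k ω).re) P :=
      hint4 (A n) (A n) (B n) (fun ω => Real.cos (Φ k ω) * S k ω * (G k ω).re)
        hA4n hA4n hB4n (hmulT (hre4 k hk2) (hmulTT (hcosT k hk2) (hST k hk2)))
        (fun ω => by ring)
    have hWsim : Integrable (fun ω => (A n ω * A n ω * B n ω
        * (Real.sin (Φ k ω) * S k ω)) * (G k ω).im) P :=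
      hint4 (A n) (A n) (B n) (fun ω => Real.sin (Φ k ω) * S k ω * (G k ω).im)
        hA4n hA4n hB4n (hmulT (him4 k hk2) (hmulTT (hsinT k hk2) (hST k hk2)))
        (fun ω => by ring)
    rw [hsplit, integral_add hWcre hWsim,
      kzre k hk2 _ hWc hWcint hWcre, kzim k hk2 _ hWs hWsint hWsim, add_zero]
  · -- (2) E[A_n B_n² (A_m - A_n)] = 0
    have heq : (fun ω => A n ω * B n ω ^ 2 * (A m ω - A n ω))
        = fun ω => ∑ k ∈ Finset.Ico n m, A n ω * B n ω ^ 2 * f k ω := by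
      funext ω; rw [hf_sum ω, Finset.mul_sum]
    have hterm : ∀ k ∈ Finset.Ico n m, Integrable (fun ω => A n ω * B n ω ^ 2 * f k ω) P := by
      intro k hk
      obtain ⟨hk1, hk2⟩ := Finset.mem_Ico.mp hk
      exact hint4 (A n) (B n) (B n) (f k) hA4n hB4n hB4n (hf4 k hk2) (fun ω => by ring)
    rw [heq, integral_finset_sum _ hterm]
    refine Finset.sum_eq_zero fun k hk => ?_
    obtain ⟨hk1, hk2⟩ := Finset.mem_Ico.mp hk
    have hsplit : (fun ω => A n ω * B n ω ^ 2 * f k ω)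
        = fun ω => (fun ω => A n ω * B n ω * B n ω * (Real.cos (Φ k ω) * R k ω)) ω * (G k ω).im
          - (fun ω => A n ω * B n ω * B n ω * (Real.sin (Φ k ω) * R k ω)) ω * (G k ω).re := by
      funext ω; rw [hfdef]; ring
    have hWc : Measurable[N (⟨k, hk2⟩, false)]
        (fun ω => A n ω * B n ω * B n ω * (Real.cos (Φ k ω) * R k ω)) := by
      have hA := hAN (⟨k, hk2⟩, false) n hk1
      have hB := hBN (⟨k, hk2⟩, false) n hk1
      exact ((hA.mul hB).mul hB).mul
        ((Real.measurable_cos.comp (hΦN _ k le_rfl)).mul (hRN _ k le_rfl))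
    have hWs : Measurable[N (⟨k, hk2⟩, true)]
        (fun ω => A n ω * B n ω * B n ω * (Real.sin (Φ k ω) * R k ω)) := by
      have hA := hAN (⟨k, hk2⟩, true) n hk1
      have hB := hBN (⟨k, hk2⟩, true) n hk1
      exact ((hA.mul hB).mul hB).mul
        ((Real.measurable_sin.comp (hΦN _ k le_rfl)).mul (hRN _ k le_rfl))
    have hcR4 := hT4 (hmulTT (hcosT k hk2) (hRT k hk2))
    have hsR4 := hT4 (hmulTT (hsinT k hk2) (hRT k hk2))
    have hWcint : Integrable (fun ω => A n ω * B n ω * B n ω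
        * (Real.cos (Φ k ω) * R k ω)) P :=
      hint4 (A n) (B n) (B n) _ hA4n hB4n hB4n hcR4 (fun ω => rfl)
    have hWsint : Integrable (fun ω => A n ω * B n ω * B n ω
        * (Real.sin (Φ k ω) * R k ω)) P :=
      hint4 (A n) (B n) (B n) _ hA4n hB4n hB4n hsR4 (fun ω => rfl)
    have hWcim : Integrable (fun ω => (A n ω * B n ω * B n ω
        * (Real.cos (Φ k ω) * R k ω)) * (G k ω).im) P :=
      hint4 (A n) (B n) (B n) (fun ω => Real.cos (Φ k ω) * R k ω * (G k ω).im)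
        hA4n hB4n hB4n (hmulT (him4 k hk2) (hmulTT (hcosT k hk2) (hRT k hk2)))
        (fun ω => by ring)
    have hWsre : Integrable (fun ω => (A n ω * B n ω * B n ω
        * (Real.sin (Φ k ω) * R k ω)) * (G k ω).re) P :=
      hint4 (A n) (B n) (B n) (fun ω => Real.sin (Φ k ω) * R k ω * (G k ω).re)
        hA4n hB4n hB4n (hmulT (hre4 k hk2) (hmulTT (hsinT k hk2) (hRT k hk2)))
        (fun ω => by ring)
    rw [hsplit, integral_sub hWcim hWsre,
      kzim k hk2 _ hWc hWcint hWcim, kzre k hk2 _ hWs hWsint hWsre, sub_zero]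
  · -- (3) E[A_n B_n (A_m - A_n)(B_m - B_n)] = 0
    have heq : (fun ω => A n ω * B n ω * (A m ω - A n ω) * (B m ω - B n ω))
        = fun ω => ∑ k ∈ Finset.Ico n m, ∑ l ∈ Finset.Ico n m,
            A n ω * B n ω * f k ω * g l ω := by
      funext ω
      rw [hf_sum ω, hg_sum ω]
      rw [show A n ω * B n ω * (∑ k ∈ Finset.Ico n m, f k ω) * (∑ l ∈ Finset.Ico n m, g l ω)
          = A n ω * B n ω * ((∑ k ∈ Finset.Ico n m, f k ω) * (∑ l ∈ Finset.Ico n m, g l ω))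
          from by ring]
      rw [Finset.sum_mul_sum, Finset.mul_sum]
      refine Finset.sum_congr rfl fun k _ => ?_
      rw [Finset.mul_sum]
      refine Finset.sum_congr rfl fun l _ => by ring
    have hterm : ∀ k ∈ Finset.Ico n m, ∀ l ∈ Finset.Ico n m,
        Integrable (fun ω => A n ω * B n ω * f k ω * g l ω) P := by
      intro k hk l hl
      obtain ⟨hk1, hk2⟩ := Finset.mem_Ico.mp hk
      obtain ⟨hl1, hl2⟩ := Finset.mem_Ico.mp hl
      exact hint4 (A n) (B n) (f k) (g l) hA4n hB4n (hf4 k hk2) (hg4 l hl2) (fun ω => rfl)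
    rw [heq, integral_finset_sum _ (fun k hk =>
      integrable_finset_sum _ (fun l hl => hterm k hk l hl))]
    refine Finset.sum_eq_zero fun k hk => ?_
    rw [integral_finset_sum _ (fun l hl => hterm k hk l hl)]
    refine Finset.sum_eq_zero fun l hl => ?_
    obtain ⟨hk1, hk2⟩ := Finset.mem_Ico.mp hk
    obtain ⟨hl1, hl2⟩ := Finset.mem_Ico.mp hl
    rcases lt_trichotomy k l with hkl | hkl | hlk
    · -- k < l : condition on component l
      have hsplit : (fun ω => A n ω * B n ω * f k ω * g l ω)
          = fun ω => (fun ω => A n ω * B n ω * f k ω * (Real.cos (Φ l ω) * S l ω)) ω * (G l ω).re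
            + (fun ω => A n ω * B n ω * f k ω * (Real.sin (Φ l ω) * S l ω)) ω * (G l ω).im := by
        funext ω; rw [hgdef]; ring
      have hWc : Measurable[N (⟨l, hl2⟩, true)]
          (fun ω => A n ω * B n ω * f k ω * (Real.cos (Φ l ω) * S l ω)) := by
        have hA := hAN (⟨l, hl2⟩, true) n (le_of_lt (lt_of_le_of_lt hk1 hkl))
        have hB := hBN (⟨l, hl2⟩, true) n (le_of_lt (lt_of_le_of_lt hk1 hkl))
        have hff := hfN (⟨l, hl2⟩, true) k hkl
        exact ((hA.mul hB).mul hff).mul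
          ((Real.measurable_cos.comp (hΦN _ l le_rfl)).mul (hSN _ l le_rfl))
      have hWs : Measurable[N (⟨l, hl2⟩, false)]
          (fun ω => A n ω * B n ω * f k ω * (Real.sin (Φ l ω) * S l ω)) := by
        have hA := hAN (⟨l, hl2⟩, false) n (le_of_lt (lt_of_le_of_lt hk1 hkl))
        have hB := hBN (⟨l, hl2⟩, false) n (le_of_lt (lt_of_le_of_lt hk1 hkl))
        have hff := hfN (⟨l, hl2⟩, false) k hkl
        exact ((hA.mul hB).mul hff).mul
          ((Real.measurable_sin.comp (hΦN _ l le_rfl)).mul (hSN _ l le_rfl))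
      have hcS4 := hT4 (hmulTT (hcosT l hl2) (hST l hl2))
      have hsS4 := hT4 (hmulTT (hsinT l hl2) (hST l hl2))
      have hWcint : Integrable (fun ω => A n ω * B n ω * f k ω
          * (Real.cos (Φ l ω) * S l ω)) P :=
        hint4 (A n) (B n) (f k) _ hA4n hB4n (hf4 k hk2) hcS4 (fun ω => rfl)
      have hWsint : Integrable (fun ω => A n ω * B n ω * f k ω
          * (Real.sin (Φ l ω) * S l ω)) P :=
        hint4 (A n) (B n) (f k) _ hA4n hB4n (hf4 k hk2) hsS4 (fun ω => rfl)
      have hWcre : Integrable (fun ω => (A n ω * B n ω * f k ω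
          * (Real.cos (Φ l ω) * S l ω)) * (G l ω).re) P :=
        hint4 (A n) (B n) (f k) (fun ω => Real.cos (Φ l ω) * S l ω * (G l ω).re)
          hA4n hB4n (hf4 k hk2) (hmulT (hre4 l hl2) (hmulTT (hcosT l hl2) (hST l hl2)))
          (fun ω => by ring)
      have hWsim : Integrable (fun ω => (A n ω * B n ω * f k ω
          * (Real.sin (Φ l ω) * S l ω)) * (G l ω).im) P :=
        hint4 (A n) (B n) (f k) (fun ω => Real.sin (Φ l ω) * S l ω * (G l ω).im)
          hA4n hB4n (hf4 k hk2) (hmulT (him4 l hl2) (hmulTT (hsinT l hl2) (hST l hl2)))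
          (fun ω => by ring)
      rw [hsplit, integral_add hWcre hWsim,
        kzre l hl2 _ hWc hWcint hWcre, kzim l hl2 _ hWs hWsint hWsim, add_zero]
    · -- k = l : the diagonal term
      subst hkl
      have hsplit : (fun ω => A n ω * B n ω * f k ω * g k ω)
          = fun ω => (fun ω => A n ω * B n ω
                * (R k ω * S k ω * (Real.cos (Φ k ω) ^ 2 - Real.sin (Φ k ω) ^ 2))
                * (G k ω).re) ω * (G k ω).im
            + ((fun ω => A n ω * B n ω
                * (R k ω * S k ω * (Real.cos (Φ k ω) * Real.sin (Φ k ω)))) ω * (G k ω).im ^ 2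
              - (fun ω => A n ω * B n ω
                * (R k ω * S k ω * (Real.cos (Φ k ω) * Real.sin (Φ k ω)))) ω * (G k ω).re ^ 2) := by
        funext ω; rw [hfdef, hgdef]; ring
      -- bounded pieces
      have hbdd1T : MemLp (fun ω => R k ω * S k ω
          * (Real.cos (Φ k ω) ^ 2 - Real.sin (Φ k ω) ^ 2)) ⊤ P := by
        have hc2 := hmulTT (hcosT k hk2) (hcosT k hk2)
        have hs2 := hmulTT (hsinT k hk2) (hsinT k hk2)
        have hd : MemLp (fun ω => Real.cos (Φ k ω) ^ 2 - Real.sin (Φ k ω) ^ 2) ⊤ P := by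
          have := hc2.sub hs2
          exact hmemEq this (fun ω => by simp [pow_two])
        exact hmulTT (hmulTT (hRT k hk2) (hST k hk2)) hd
      have hbdd2T : MemLp (fun ω => R k ω * S k ω
          * (Real.cos (Φ k ω) * Real.sin (Φ k ω))) ⊤ P :=
        hmulTT (hmulTT (hRT k hk2) (hST k hk2)) (hmulTT (hcosT k hk2) (hsinT k hk2))
      -- measurability of bounded pieces
      have hbdd1m : ∀ q : Fin m × Bool, k ≤ (q.1 : ℕ) → Measurable[N q]
          (fun ω => R k ω * S k ω * (Real.cos (Φ k ω) ^ 2 - Real.sin (Φ k ω) ^ 2)) := by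
        intro q hq
        exact ((hRN q k hq).mul (hSN q k hq)).mul
          (((Real.measurable_cos.comp (hΦN q k hq)).pow_const 2).sub
            ((Real.measurable_sin.comp (hΦN q k hq)).pow_const 2))
      have hbdd2m : ∀ q : Fin m × Bool, k ≤ (q.1 : ℕ) → Measurable[N q]
          (fun ω => R k ω * S k ω * (Real.cos (Φ k ω) * Real.sin (Φ k ω))) := by
        intro q hq
        exact ((hRN q k hq).mul (hSN q k hq)).mul
          ((Real.measurable_cos.comp (hΦN q k hq)).mul
            (Real.measurable_sin.comp (hΦN q k hq)))
      -- W1 = A B bdd1 re, we pair it against im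
      have hW1m : Measurable[N (⟨k, hk2⟩, false)] (fun ω => A n ω * B n ω
          * (R k ω * S k ω * (Real.cos (Φ k ω) ^ 2 - Real.sin (Φ k ω) ^ 2)) * (G k ω).re) := by
        have hA := hAN (⟨k, hk2⟩, false) n hk1
        have hB := hBN (⟨k, hk2⟩, false) n hk1
        exact ((hA.mul hB).mul (hbdd1m _ le_rfl)).mul (hreN k hk2)
      have hW1int : Integrable (fun ω => A n ω * B n ω
          * (R k ω * S k ω * (Real.cos (Φ k ω) ^ 2 - Real.sin (Φ k ω) ^ 2))
          * (G k ω).re) P :=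
        hint4 (A n) (B n) (fun ω => (R k ω * S k ω
            * (Real.cos (Φ k ω) ^ 2 - Real.sin (Φ k ω) ^ 2)) * (G k ω).re)
          (fun _ => 1) hA4n hB4n (hmulT (hre4 k hk2) hbdd1T) (memLp_const 1)
          (fun ω => by ring)
      have hW1im : Integrable (fun ω => (A n ω * B n ω
          * (R k ω * S k ω * (Real.cos (Φ k ω) ^ 2 - Real.sin (Φ k ω) ^ 2))
          * (G k ω).re) * (G k ω).im) P :=
        hint4 (A n) (B n) (fun ω => (R k ω * S k ω
            * (Real.cos (Φ k ω) ^ 2 - Real.sin (Φ k ω) ^ 2)) * (G k ω).re)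
          (fun ω => (G k ω).im) hA4n hB4n (hmulT (hre4 k hk2) hbdd1T) (him4 k hk2)
          (fun ω => by ring)
      -- W2 = A B bdd2, paired against im² and re²
      have hW2mt : Measurable[N (⟨k, hk2⟩, true)] (fun ω => A n ω * B n ω
          * (R k ω * S k ω * (Real.cos (Φ k ω) * Real.sin (Φ k ω)))) := by
        have hA := hAN (⟨k, hk2⟩, true) n hk1
        have hB := hBN (⟨k, hk2⟩, true) n hk1
        exact (hA.mul hB).mul (hbdd2m _ le_rfl)
      have hW2mf : Measurable[N (⟨k, hk2⟩, false)] (fun ω => A n ω * B n ω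
          * (R k ω * S k ω * (Real.cos (Φ k ω) * Real.sin (Φ k ω)))) := by
        have hA := hAN (⟨k, hk2⟩, false) n hk1
        have hB := hBN (⟨k, hk2⟩, false) n hk1
        exact (hA.mul hB).mul (hbdd2m _ le_rfl)
      have hW2int : Integrable (fun ω => A n ω * B n ω
          * (R k ω * S k ω * (Real.cos (Φ k ω) * Real.sin (Φ k ω)))) P :=
        hint4 (A n) (B n) (fun ω => R k ω * S k ω * (Real.cos (Φ k ω) * Real.sin (Φ k ω)))
          (fun _ => 1) hA4n hB4n (hT4 hbdd2T) (memLp_const 1) (fun ω => by ring)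
      have hW2im : Integrable (fun ω => (A n ω * B n ω
          * (R k ω * S k ω * (Real.cos (Φ k ω) * Real.sin (Φ k ω)))) * (G k ω).im ^ 2) P :=
        hint4 (A n) (B n)
          (fun ω => (R k ω * S k ω * (Real.cos (Φ k ω) * Real.sin (Φ k ω))) * (G k ω).im)
          (fun ω => (G k ω).im) hA4n hB4n (hmulT (him4 k hk2) hbdd2T) (him4 k hk2)
          (fun ω => by ring)
      have hW2re : Integrable (fun ω => (A n ω * B n ω
          * (R k ω * S k ω * (Real.cos (Φ k ω) * Real.sin (Φ k ω)))) * (G k ω).re ^ 2) P :=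
        hint4 (A n) (B n)
          (fun ω => (R k ω * S k ω * (Real.cos (Φ k ω) * Real.sin (Φ k ω))) * (G k ω).re)
          (fun ω => (G k ω).re) hA4n hB4n (hmulT (hre4 k hk2) hbdd2T) (hre4 k hk2)
          (fun ω => by ring)
      have hW2sub : Integrable (fun ω => (fun ω => A n ω * B n ω
          * (R k ω * S k ω * (Real.cos (Φ k ω) * Real.sin (Φ k ω)))) ω * (G k ω).im ^ 2
          - (fun ω => A n ω * B n ω
          * (R k ω * S k ω * (Real.cos (Φ k ω) * Real.sin (Φ k ω)))) ω * (G k ω).re ^ 2) P :=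
        hW2im.sub hW2re
      rw [hsplit, integral_add hW1im hW2sub,
        kzim k hk2 _ hW1m hW1int hW1im, integral_sub hW2im hW2re,
        kzsq k hk2 _ hW2mt hW2mf hW2int, sub_self, add_zero]
    · -- l < k : condition on component k
      have hsplit : (fun ω => A n ω * B n ω * f k ω * g l ω)
          = fun ω => (fun ω => A n ω * B n ω * g l ω * (Real.cos (Φ k ω) * R k ω)) ω * (G k ω).im
            - (fun ω => A n ω * B n ω * g l ω * (Real.sin (Φ k ω) * R k ω)) ω * (G k ω).re := by
        funext ω; rw [hfdef]; ring
      have hWc : Measurable[N (⟨k, hk2⟩, false)]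
          (fun ω => A n ω * B n ω * g l ω * (Real.cos (Φ k ω) * R k ω)) := by
        have hA := hAN (⟨k, hk2⟩, false) n hk1
        have hB := hBN (⟨k, hk2⟩, false) n hk1
        have hgg := hgN (⟨k, hk2⟩, false) l hlk
        exact ((hA.mul hB).mul hgg).mul
          ((Real.measurable_cos.comp (hΦN _ k le_rfl)).mul (hRN _ k le_rfl))
      have hWs : Measurable[N (⟨k, hk2⟩, true)]
          (fun ω => A n ω * B n ω * g l ω * (Real.sin (Φ k ω) * R k ω)) := by
        have hA := hAN (⟨k, hk2⟩, true) n hk1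
        have hB := hBN (⟨k, hk2⟩, true) n hk1
        have hgg := hgN (⟨k, hk2⟩, true) l hlk
        exact ((hA.mul hB).mul hgg).mul
          ((Real.measurable_sin.comp (hΦN _ k le_rfl)).mul (hRN _ k le_rfl))
      have hcR4 := hT4 (hmulTT (hcosT k hk2) (hRT k hk2))
      have hsR4 := hT4 (hmulTT (hsinT k hk2) (hRT k hk2))
      have hWcint : Integrable (fun ω => A n ω * B n ω * g l ω
          * (Real.cos (Φ k ω) * R k ω)) P :=
        hint4 (A n) (B n) (g l) _ hA4n hB4n (hg4 l hl2) hcR4 (fun ω => rfl)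
      have hWsint : Integrable (fun ω => A n ω * B n ω * g l ω
          * (Real.sin (Φ k ω) * R k ω)) P :=
        hint4 (A n) (B n) (g l) _ hA4n hB4n (hg4 l hl2) hsR4 (fun ω => rfl)
      have hWcim : Integrable (fun ω => (A n ω * B n ω * g l ω
          * (Real.cos (Φ k ω) * R k ω)) * (G k ω).im) P :=
        hint4 (A n) (B n) (g l) (fun ω => Real.cos (Φ k ω) * R k ω * (G k ω).im)
          hA4n hB4n (hg4 l hl2) (hmulT (him4 k hk2) (hmulTT (hcosT k hk2) (hRT k hk2)))
          (fun ω => by ring)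
      have hWsre : Integrable (fun ω => (A n ω * B n ω * g l ω
          * (Real.sin (Φ k ω) * R k ω)) * (G k ω).re) P :=
        hint4 (A n) (B n) (g l) (fun ω => Real.sin (Φ k ω) * R k ω * (G k ω).re)
          hA4n hB4n (hg4 l hl2) (hmulT (hre4 k hk2) (hmulTT (hsinT k hk2) (hRT k hk2)))
          (fun ω => by ring)
      rw [hsplit, integral_sub hWcim hWsre,
        kzim k hk2 _ hWc hWcint hWcim, kzre k hk2 _ hWs hWsint hWsre, sub_zero]
end

section
/- Let (Ω, 𝓕, P) be a probability space, with E[·] denoting expectation and Var[N] = E[N²] − (E[N])². Fix real constants L > 0, ε > 0, α₀ and β₀. Let X, Y : [0, L] × Ω → ℝ be jointly measurable processes such that X, Y and the product X·Y each satisfy ∫∫ (·)² dλ dP < ∞ (λ the Lebesgue measure on [0, L]). Assume the following moment identities: (i) E[X(z)] = 0 and E[Y(z)] = (1/2)ε²z for all z ∈ [0, L]; (ii) for all 0 ≤ s ≤ t ≤ L: E[X(s)X(t)] = (1/6)ε²sβ₀ + (1/24)ε⁴s²; (iii) for all 0 ≤ s ≤ t ≤ L: E[Y(s)Y(t)] =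 (1/2)ε²sβ₀ + (3/8)ε⁴s² + (1/4)ε⁴s(t−s); (iv) E[X(s)Y(t)] = 0 for all s, t ∈ [0, L]; (v) E[X(s)·X(t)Y(t)] = (1/2)ε²t·((1/6)ε²·min(s,t)·β₀ + (1/24)ε⁴·min(s,t)²) for all s, t ∈ [0, L]; (vi) E[Y(s)·X(t)Y(t)] = 0 for all s, t ∈ [0, L]; (vii) for all 0 ≤ s ≤ t ≤ L: E[X(s)Y(s)·X(t)Y(t)] = (1/12)ε⁴s²β₀² + (1/18)ε⁶s³β₀ + (1/144)ε⁸s⁴ + (1/4)ε⁴st·((1/6)ε²sβ₀ + (1/24)ε⁴s²). Define N(ω) = 8α₀∫₀^L Y(z,ω) dz + 8β₀∫₀^L X(z,ω) dz + 8∫₀^L X(z,ω)Y(z,ω) dz. Then Var[N] = (32/3)ε²L³α₀²β₀ + (32/9)ε²L³β₀³ + (16/3)ε⁴L⁴α₀² + (32/9)ε⁴L⁴β₀² + (46/45)ε⁶L⁵β₀ + (23/270)ε⁸L⁶ − 4ε⁴L⁴α₀². -/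
open MeasureTheory

section aux

variable {Ω : Type*} [MeasurableSpace Ω]

lemma mono_ii (c : ℝ) (n : ℕ) (a b : ℝ) :
    IntervalIntegrable (fun t : ℝ => c * t ^ n) volume a b :=
  (continuous_const.mul (continuous_pow n)).intervalIntegrable a b

lemma int_mono (c : ℝ) (n : ℕ) (a b : ℝ) :
    ∫ t in a..b, c * t ^ n = c * ((b ^ (n + 1) - a ^ (n + 1)) / (n + 1)) := by
  rw [intervalIntegral.integral_const_mul, integral_pow]

lemma poly_int (a b c0 c1 c2 c3 c4 c5 : ℝ) :
    ∫ t in a..b,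
        (c0 * t ^ 0 + c1 * t ^ 1 + c2 * t ^ 2 + c3 * t ^ 3 + c4 * t ^ 4 + c5 * t ^ 5) =
      c0 * (b - a) + c1 * ((b ^ 2 - a ^ 2) / 2) + c2 * ((b ^ 3 - a ^ 3) / 3) +
        c3 * ((b ^ 4 - a ^ 4) / 4) + c4 * ((b ^ 5 - a ^ 5) / 5) +
          c5 * ((b ^ 6 - a ^ 6) / 6) := by
  have h0 := mono_ii c0 0 a b
  have h1 := mono_ii c1 1 a b
  have h2 := mono_ii c2 2 a b
  have h3 := mono_ii c3 3 a b
  have h4 := mono_ii c4 4 a b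
  have h5 := mono_ii c5 5 a b
  rw [intervalIntegral.integral_add ((((h0.add h1).add h2).add h3).add h4) h5,
    intervalIntegral.integral_add (((h0.add h1).add h2).add h3) h4,
    intervalIntegral.integral_add ((h0.add h1).add h2) h3,
    intervalIntegral.integral_add (h0.add h1) h2,
    intervalIntegral.integral_add h0 h1,
    int_mono, int_mono, int_mono, int_mono, int_mono, int_mono]
  norm_num

lemma integrable_comp_fst (μ ν : Measure ℝ) (P : Measure Ω) [SFinite μ] [SFinite P]
    [IsFiniteMeasure ν] {g : ℝ × Ω → ℝ} (hgm : Measurable g) (hg : Integrable g (μ.prod P)) :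
    Integrable (fun p : (ℝ × ℝ) × Ω => g (p.1.1, p.2)) ((μ.prod ν).prod P) := by
  have hm : Measurable fun p : (ℝ × ℝ) × Ω => g (p.1.1, p.2) :=
    hgm.comp ((measurable_fst.comp measurable_fst).prodMk measurable_snd)
  refine ⟨hm.aestronglyMeasurable, ?_⟩
  rw [hasFiniteIntegral_def]
  have hφ : Measurable fun s : ℝ => ∫⁻ ω, ‖g (s, ω)‖₊ ∂P :=
    Measurable.lintegral_prod_right' hgm.enorm
  calc ∫⁻ p, ‖g (p.1.1, p.2)‖₊ ∂((μ.prod ν).prod P)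
      = ∫⁻ x, ∫⁻ ω, ‖g (x.1, ω)‖₊ ∂P ∂(μ.prod ν) := lintegral_prod _ hm.enorm.aemeasurable
    _ = ∫⁻ s, ∫⁻ _t, (∫⁻ ω, ‖g (s, ω)‖₊ ∂P) ∂ν ∂μ :=
        lintegral_prod _ (hφ.comp measurable_fst).aemeasurable
    _ = ∫⁻ s, (∫⁻ ω, ‖g (s, ω)‖₊ ∂P) * ν Set.univ ∂μ := by simp [lintegral_const]
    _ = (∫⁻ s, ∫⁻ ω, ‖g (s, ω)‖₊ ∂P ∂μ) * ν Set.univ := lintegral_mul_const _ hφ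
    _ = (∫⁻ q, ‖g q‖₊ ∂(μ.prod P)) * ν Set.univ := by
        rw [lintegral_prod (fun q => (‖g q‖₊ : ENNReal)) hgm.enorm.aemeasurable]
    _ < ⊤ := ENNReal.mul_lt_top hg.2 (measure_lt_top _ _)

lemma integrable_comp_snd (μ ν : Measure ℝ) (P : Measure Ω) [SFinite ν] [SFinite P]
    [IsFiniteMeasure μ] {g : ℝ × Ω → ℝ} (hgm : Measurable g) (hg : Integrable g (ν.prod P)) :
    Integrable (fun p : (ℝ × ℝ) × Ω => g (p.1.2, p.2)) ((μ.prod ν).prod P) := by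
  have hm : Measurable fun p : (ℝ × ℝ) × Ω => g (p.1.2, p.2) :=
    hgm.comp ((measurable_snd.comp measurable_fst).prodMk measurable_snd)
  refine ⟨hm.aestronglyMeasurable, ?_⟩
  rw [hasFiniteIntegral_def]
  have hφ : Measurable fun t : ℝ => ∫⁻ ω, ‖g (t, ω)‖₊ ∂P :=
    Measurable.lintegral_prod_right' hgm.enorm
  calc ∫⁻ p, ‖g (p.1.2, p.2)‖₊ ∂((μ.prod ν).prod P)
      = ∫⁻ x, ∫⁻ ω, ‖g (x.2, ω)‖₊ ∂P ∂(μ.prod ν) := lintegral_prod _ hm.enorm.aemeasurable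
    _ = ∫⁻ _s, ∫⁻ t, (∫⁻ ω, ‖g (t, ω)‖₊ ∂P) ∂ν ∂μ :=
        lintegral_prod _ (hφ.comp measurable_snd).aemeasurable
    _ = ∫⁻ _s, (∫⁻ q, ‖g q‖₊ ∂(ν.prod P)) ∂μ := by
        congr 1
        funext s
        rw [lintegral_prod (fun q => (‖g q‖₊ : ENNReal)) hgm.enorm.aemeasurable]
    _ = (∫⁻ q, ‖g q‖₊ ∂(ν.prod P)) * μ Set.univ := lintegral_const _
    _ < ⊤ := ENNReal.mul_lt_top hg.2 (measure_lt_top _ _)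

lemma pair_integral (P : Measure Ω) [IsProbabilityMeasure P]
    (μ : Measure ℝ) [IsFiniteMeasure μ]
    (F G : ℝ → Ω → ℝ)
    (hF : Measurable (Function.uncurry F)) (hG : Measurable (Function.uncurry G))
    (hFsq : Integrable (fun p : ℝ × Ω => F p.1 p.2 ^ 2) (μ.prod P))
    (hGsq : Integrable (fun p : ℝ × Ω => G p.1 p.2 ^ 2) (μ.prod P)) :
    Integrable (fun ω => (∫ s, F s ω ∂μ) * (∫ t, G t ω ∂μ)) P ∧
      ∫ ω, (∫ s, F s ω ∂μ) * (∫ t, G t ω ∂μ) ∂P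
        = ∫ s, ∫ t, (∫ ω, F s ω * G t ω ∂P) ∂μ ∂μ := by
  have hFm : Measurable fun p : ℝ × Ω => F p.1 p.2 := hF
  have hGm : Measurable fun p : ℝ × Ω => G p.1 p.2 := hG
  have hHm : Measurable fun p : (ℝ × ℝ) × Ω => F p.1.1 p.2 * G p.1.2 p.2 :=
    (hFm.comp ((measurable_fst.comp measurable_fst).prodMk measurable_snd)).mul
      (hGm.comp ((measurable_snd.comp measurable_fst).prodMk measurable_snd))
  have h1 : Integrable (fun p : (ℝ × ℝ) × Ω => F p.1.1 p.2 ^ 2) ((μ.prod μ).prod P) :=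
    integrable_comp_fst μ μ P (hFm.pow_const 2) hFsq
  have h2 : Integrable (fun p : (ℝ × ℝ) × Ω => G p.1.2 p.2 ^ 2) ((μ.prod μ).prod P) :=
    integrable_comp_snd μ μ P (hGm.pow_const 2) hGsq
  have hH : Integrable (fun p : (ℝ × ℝ) × Ω => F p.1.1 p.2 * G p.1.2 p.2)
      ((μ.prod μ).prod P) := by
    refine (h1.add h2).mono' hHm.aestronglyMeasurable (ae_of_all _ fun p => ?_)
    have h := abs_mul (F p.1.1 p.2) (G p.1.2 p.2)
    simp only [Real.norm_eq_abs, Pi.add_apply]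
    nlinarith [sq_nonneg (|F p.1.1 p.2| - |G p.1.2 p.2|), sq_abs (F p.1.1 p.2),
      sq_abs (G p.1.2 p.2), abs_nonneg (F p.1.1 p.2), abs_nonneg (G p.1.2 p.2)]
  have key : ∀ ω, (∫ s, F s ω ∂μ) * (∫ t, G t ω ∂μ)
      = ∫ p, F p.1 ω * G p.2 ω ∂(μ.prod μ) := fun ω =>
    (integral_prod_mul (fun s => F s ω) (fun t => G t ω)).symm
  constructor
  · exact Integrable.congr hH.swap.integral_prod_left (ae_of_all _ fun ω => (key ω).symm)
  · calc ∫ ω, (∫ s, F s ω ∂μ) * (∫ t, G t ω ∂μ) ∂P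
        = ∫ ω, ∫ p, F p.1 ω * G p.2 ω ∂(μ.prod μ) ∂P := integral_congr_ae (ae_of_all _ key)
      _ = ∫ p, ∫ ω, F p.1 ω * G p.2 ω ∂P ∂(μ.prod μ) :=
          (integral_integral_swap
            (f := fun (p : ℝ × ℝ) (ω : Ω) => F p.1 ω * G p.2 ω) hH).symm
      _ = ∫ s, ∫ t, (∫ ω, F s ω * G t ω ∂P) ∂μ ∂μ :=
          integral_prod _ hH.integral_prod_left

end aux

/-- Variance formula of Theorem 4 of the paper, conditioned on the input eigenvalue
`ζ(0) = α₀ + jβ₀`: the noise `N = 8α₀∫₀^L Y + 8β₀∫₀^L X + 8∫₀^L X·Y` in the log-magnitude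
of the spectral amplitude has variance
`Var[N] = (32/3)ε²L³α₀²β₀ + (32/9)ε²L³β₀³ + (16/3)ε⁴L⁴α₀² + (32/9)ε⁴L⁴β₀²
  + (46/45)ε⁶L⁵β₀ + (23/270)ε⁸L⁶ − 4ε⁴L⁴α₀²`. -/
theorem spectral_amplitude_noise_variance
    {Ω : Type*} [MeasurableSpace Ω] (P : Measure Ω) [IsProbabilityMeasure P]
    (L ε α₀ β₀ : ℝ) (hL : 0 < L) (hε : 0 < ε)
    (X Y : ℝ → Ω → ℝ)
    (hXmeas : Measurable (Function.uncurry X))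
    (hYmeas : Measurable (Function.uncurry Y))
    (hXsq : Integrable (fun p : ℝ × Ω => (X p.1 p.2) ^ 2)
      ((volume.restrict (Set.Icc 0 L)).prod P))
    (hYsq : Integrable (fun p : ℝ × Ω => (Y p.1 p.2) ^ 2)
      ((volume.restrict (Set.Icc 0 L)).prod P))
    (hXYsq : Integrable (fun p : ℝ × Ω => (X p.1 p.2 * Y p.1 p.2) ^ 2)
      ((volume.restrict (Set.Icc 0 L)).prod P))
    -- (i) means
    (hXmean : ∀ z ∈ Set.Icc (0 : ℝ) L, ∫ ω, X z ω ∂P = 0)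
    (hYmean : ∀ z ∈ Set.Icc (0 : ℝ) L, ∫ ω, Y z ω ∂P = (1 / 2) * ε ^ 2 * z)
    -- (ii) covariance of X
    (hXX : ∀ s t : ℝ, 0 ≤ s → s ≤ t → t ≤ L →
      ∫ ω, X s ω * X t ω ∂P = (1 / 6) * ε ^ 2 * s * β₀ + (1 / 24) * ε ^ 4 * s ^ 2)
    -- (iii) covariance of Y
    (hYY : ∀ s t : ℝ, 0 ≤ s → s ≤ t → t ≤ L →
      ∫ ω, Y s ω * Y t ω ∂P =
        (1 / 2) * ε ^ 2 * s * β₀ + (3 / 8) * ε ^ 4 * s ^ 2 + (1 / 4) * ε ^ 4 * s * (t - s))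
    -- (iv) X and Y uncorrelated
    (hXY : ∀ s ∈ Set.Icc (0 : ℝ) L, ∀ t ∈ Set.Icc (0 : ℝ) L,
      ∫ ω, X s ω * Y t ω ∂P = 0)
    -- (v) cross moment of X with the product X·Y
    (hXXY : ∀ s ∈ Set.Icc (0 : ℝ) L, ∀ t ∈ Set.Icc (0 : ℝ) L,
      ∫ ω, X s ω * (X t ω * Y t ω) ∂P =
        (1 / 2) * ε ^ 2 * t *
          ((1 / 6) * ε ^ 2 * min s t * β₀ + (1 / 24) * ε ^ 4 * (min s t) ^ 2))
    -- (vi) cross moment of Y with the product X·Y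
    (hYXY : ∀ s ∈ Set.Icc (0 : ℝ) L, ∀ t ∈ Set.Icc (0 : ℝ) L,
      ∫ ω, Y s ω * (X t ω * Y t ω) ∂P = 0)
    -- (vii) covariance of the product X·Y
    (hXYXY : ∀ s t : ℝ, 0 ≤ s → s ≤ t → t ≤ L →
      ∫ ω, (X s ω * Y s ω) * (X t ω * Y t ω) ∂P =
        (1 / 12) * ε ^ 4 * s ^ 2 * β₀ ^ 2 + (1 / 18) * ε ^ 6 * s ^ 3 * β₀
          + (1 / 144) * ε ^ 8 * s ^ 4
          + (1 / 4) * ε ^ 4 * s * t * ((1 / 6) * ε ^ 2 * s * β₀ + (1 / 24) * ε ^ 4 * s ^ 2))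
    (N : Ω → ℝ)
    (hN : ∀ ω, N ω = 8 * α₀ * (∫ z in (0 : ℝ)..L, Y z ω)
      + 8 * β₀ * (∫ z in (0 : ℝ)..L, X z ω)
      + 8 * (∫ z in (0 : ℝ)..L, X z ω * Y z ω)) :
    (∫ ω, (N ω) ^ 2 ∂P) - (∫ ω, N ω ∂P) ^ 2 =
      (32 / 3) * ε ^ 2 * L ^ 3 * α₀ ^ 2 * β₀ + (32 / 9) * ε ^ 2 * L ^ 3 * β₀ ^ 3
        + (16 / 3) * ε ^ 4 * L ^ 4 * α₀ ^ 2 + (32 / 9) * ε ^ 4 * L ^ 4 * β₀ ^ 2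
        + (46 / 45) * ε ^ 6 * L ^ 5 * β₀ + (23 / 270) * ε ^ 8 * L ^ 6
        - 4 * ε ^ 4 * L ^ 4 * α₀ ^ 2 := by
  set μ : Measure ℝ := volume.restrict (Set.Icc 0 L) with hμdef
  haveI : IsFiniteMeasure μ := by
    constructor
    rw [hμdef, Measure.restrict_apply_univ, Real.volume_Icc]
    exact ENNReal.ofReal_lt_top
  -- basic measurability
  have hXm : Measurable fun p : ℝ × Ω => X p.1 p.2 := hXmeas
  have hYm : Measurable fun p : ℝ × Ω => Y p.1 p.2 := hYmeas
  have hXYm : Measurable (Function.uncurry fun z ω => X z ω * Y z ω) := hXm.mul hYm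
  -- plain integrability of the processes
  have sq_int : ∀ (F : ℝ → Ω → ℝ), Measurable (Function.uncurry F) →
      Integrable (fun p : ℝ × Ω => F p.1 p.2 ^ 2) (μ.prod P) →
      Integrable (fun p : ℝ × Ω => F p.1 p.2) (μ.prod P) := by
    intro F hFm hFsq
    have hmm : AEStronglyMeasurable (fun p : ℝ × Ω => F p.1 p.2) (μ.prod P) :=
      hFm.aestronglyMeasurable
    exact memLp_one_iff_integrable.mp
      (((memLp_two_iff_integrable_sq hmm).mpr hFsq).mono_exponent (by norm_num))
  have hXint : Integrable (fun p : ℝ × Ω => X p.1 p.2) (μ.prod P) := sq_int X hXmeas hXsq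
  have hYint : Integrable (fun p : ℝ × Ω => Y p.1 p.2) (μ.prod P) := sq_int Y hYmeas hYsq
  have hXYint : Integrable (fun p : ℝ × Ω => X p.1 p.2 * Y p.1 p.2) (μ.prod P) :=
    sq_int (fun z ω => X z ω * Y z ω) hXYm hXYsq
  -- interval integral = integral against μ
  have hIcc : ∀ f : ℝ → ℝ, ∫ z in (0 : ℝ)..L, f z = ∫ z, f z ∂μ := by
    intro f
    rw [intervalIntegral.integral_of_le hL.le, hμdef, ← integral_Icc_eq_integral_Ioc]
  have hN' : ∀ ω, N ω = 8 * α₀ * (∫ z, Y z ω ∂μ) + 8 * β₀ * (∫ z, X z ω ∂μ)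
      + 8 * (∫ z, X z ω * Y z ω ∂μ) := by
    intro ω
    rw [hN ω, hIcc (fun z => Y z ω), hIcc (fun z => X z ω), hIcc (fun z => X z ω * Y z ω)]
  -- integrability of path integrals
  have hAint : Integrable (fun ω => ∫ z, Y z ω ∂μ) P := hYint.swap.integral_prod_left
  have hBint : Integrable (fun ω => ∫ z, X z ω ∂μ) P := hXint.swap.integral_prod_left
  have hCint : Integrable (fun ω => ∫ z, X z ω * Y z ω ∂μ) P :=
    hXYint.swap.integral_prod_left
  -- means of path integrals
  have hEA : ∫ ω, (∫ z, Y z ω ∂μ) ∂P = ε ^ 2 * L ^ 2 / 4 := by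
    calc ∫ ω, (∫ z, Y z ω ∂μ) ∂P = ∫ z, (∫ ω, Y z ω ∂P) ∂μ :=
          (integral_integral_swap (f := fun z ω => Y z ω) hYint).symm
      _ = ∫ z, (1 / 2) * ε ^ 2 * z ∂μ :=
          setIntegral_congr_fun measurableSet_Icc fun z hz => hYmean z hz
      _ = ∫ z in (0 : ℝ)..L, (1 / 2) * ε ^ 2 * z := (hIcc _).symm
      _ = ε ^ 2 * L ^ 2 / 4 := by
          rw [intervalIntegral.integral_congr
            (g := fun t : ℝ => (0 : ℝ) * t ^ 0 + ((1 / 2) * ε ^ 2) * t ^ 1 + 0 * t ^ 2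
              + 0 * t ^ 3 + 0 * t ^ 4 + 0 * t ^ 5) (fun t _ => by ring), poly_int]
          ring
  have hEB : ∫ ω, (∫ z, X z ω ∂μ) ∂P = 0 := by
    calc ∫ ω, (∫ z, X z ω ∂μ) ∂P = ∫ z, (∫ ω, X z ω ∂P) ∂μ :=
          (integral_integral_swap (f := fun z ω => X z ω) hXint).symm
      _ = ∫ z, (0 : ℝ) ∂μ :=
          setIntegral_congr_fun measurableSet_Icc fun z hz => hXmean z hz
      _ = 0 := integral_zero _ _
  have hEC : ∫ ω, (∫ z, X z ω * Y z ω ∂μ) ∂P = 0 := by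
    calc ∫ ω, (∫ z, X z ω * Y z ω ∂μ) ∂P = ∫ z, (∫ ω, X z ω * Y z ω ∂P) ∂μ :=
          (integral_integral_swap (f := fun z ω => X z ω * Y z ω) hXYint).symm
      _ = ∫ z, (0 : ℝ) ∂μ :=
          setIntegral_congr_fun measurableSet_Icc fun z hz => hXY z hz z hz
      _ = 0 := integral_zero _ _
  -- the mean of N
  have hEN : ∫ ω, N ω ∂P = 2 * α₀ * ε ^ 2 * L ^ 2 := by
    calc ∫ ω, N ω ∂P
        = ∫ ω, (8 * α₀ * (∫ z, Y z ω ∂μ) + 8 * β₀ * (∫ z, X z ω ∂μ)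
            + 8 * (∫ z, X z ω * Y z ω ∂μ)) ∂P := integral_congr_ae (ae_of_all _ hN')
      _ = 2 * α₀ * ε ^ 2 * L ^ 2 := by
          have j1 : Integrable (fun ω => 8 * α₀ * (∫ z, Y z ω ∂μ)) P := hAint.const_mul _
          have j2 : Integrable (fun ω => 8 * β₀ * (∫ z, X z ω ∂μ)) P := hBint.const_mul _
          have j3 : Integrable (fun ω => 8 * (∫ z, X z ω * Y z ω ∂μ)) P := hCint.const_mul _
          have j12 : Integrable (fun ω => 8 * α₀ * (∫ z, Y z ω ∂μ)
              + 8 * β₀ * (∫ z, X z ω ∂μ)) P := j1.add j2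
          rw [integral_add j12 j3, integral_add j1 j2,
            integral_const_mul, integral_const_mul, integral_const_mul, hEA, hEB, hEC]
          ring
  -- the six pair integrals
  have pYY := pair_integral P μ Y Y hYmeas hYmeas hYsq hYsq
  have pXX := pair_integral P μ X X hXmeas hXmeas hXsq hXsq
  have pCC := pair_integral P μ (fun z ω => X z ω * Y z ω) (fun z ω => X z ω * Y z ω)
    hXYm hXYm hXYsq hXYsq
  have pYX := pair_integral P μ Y X hYmeas hXmeas hYsq hXsq
  have pYC := pair_integral P μ Y (fun z ω => X z ω * Y z ω) hYmeas hXYm hYsq hXYsq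
  have pXC := pair_integral P μ X (fun z ω => X z ω * Y z ω) hXmeas hXYm hXsq hXYsq
  have pCC2 : ∫ ω, (∫ s, X s ω * Y s ω ∂μ) * (∫ t, X t ω * Y t ω ∂μ) ∂P
      = ∫ s, ∫ t, (∫ ω, (X s ω * Y s ω) * (X t ω * Y t ω) ∂P) ∂μ ∂μ := pCC.2
  have pYC2 : ∫ ω, (∫ s, Y s ω ∂μ) * (∫ t, X t ω * Y t ω ∂μ) ∂P
      = ∫ s, ∫ t, (∫ ω, Y s ω * (X t ω * Y t ω) ∂P) ∂μ ∂μ := pYC.2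
  have pXC2 : ∫ ω, (∫ s, X s ω ∂μ) * (∫ t, X t ω * Y t ω ∂μ) ∂P
      = ∫ s, ∫ t, (∫ ω, X s ω * (X t ω * Y t ω) ∂P) ∂μ ∂μ := pXC.2
  -- evaluation of the double integrals
  have IYY : ∫ s, ∫ t, (∫ ω, Y s ω * Y t ω ∂P) ∂μ ∂μ
      = (1 / 6) * ε ^ 2 * β₀ * L ^ 3 + (1 / 12) * ε ^ 4 * L ^ 4 := by
    have inner : ∀ s ∈ Set.Icc (0 : ℝ) L, ∫ t, (∫ ω, Y s ω * Y t ω ∂P) ∂μ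
        = (1 / 2) * ε ^ 2 * β₀ * L * s + (1 / 8) * ε ^ 4 * L ^ 2 * s
          - (1 / 4) * ε ^ 2 * β₀ * s ^ 2 + (1 / 8) * ε ^ 4 * L * s ^ 2
          - (1 / 12) * ε ^ 4 * s ^ 3 := by
      intro s hs
      set f : ℝ → ℝ := fun t => (1 / 2) * ε ^ 2 * (min s t) * β₀ + (3 / 8) * ε ^ 4 * (min s t) ^ 2
        + (1 / 4) * ε ^ 4 * (min s t) * (max s t - min s t) with hfdef
      have hfc : Continuous f := by
        refine Continuous.add (Continuous.add ?_ ?_) ?_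
        · exact (continuous_const.mul (continuous_const.min continuous_id)).mul continuous_const
        · exact continuous_const.mul ((continuous_const.min continuous_id).pow 2)
        · exact (continuous_const.mul (continuous_const.min continuous_id)).mul
            ((continuous_const.max continuous_id).sub (continuous_const.min continuous_id))
      have e1 : ∫ t in (0 : ℝ)..s, f t
          = ∫ t in (0 : ℝ)..s, (0 * t ^ 0
                + ((1 / 2) * ε ^ 2 * β₀ + (1 / 4) * ε ^ 4 * s) * t ^ 1
                + ((3 / 8) * ε ^ 4 - (1 / 4) * ε ^ 4) * t ^ 2
                + 0 * t ^ 3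
                + 0 * t ^ 4
                + (0 : ℝ) * t ^ 5) := by
        refine intervalIntegral.integral_congr fun t ht => ?_
        rw [Set.uIcc_of_le hs.1] at ht
        simp only [hfdef, min_eq_right ht.2, max_eq_left ht.2]
        ring
      have e2 : ∫ t in s..L, f t
          = ∫ t in s..L, (((1 / 2) * ε ^ 2 * s * β₀ + (3 / 8) * ε ^ 4 * s ^ 2 - (1 / 4) * ε ^ 4 * s ^ 2) * t ^ 0
                + ((1 / 4) * ε ^ 4 * s) * t ^ 1
                + 0 * t ^ 2
                + 0 * t ^ 3
                + 0 * t ^ 4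
                + (0 : ℝ) * t ^ 5) := by
        refine intervalIntegral.integral_congr fun t ht => ?_
        rw [Set.uIcc_of_le hs.2] at ht
        simp only [hfdef, min_eq_left ht.1, max_eq_right ht.1]
        ring
      calc ∫ t, (∫ ω, Y s ω * Y t ω ∂P) ∂μ
          = ∫ t, f t ∂μ := by
            refine setIntegral_congr_fun measurableSet_Icc fun t ht => ?_
            rcases le_total s t with h | h
            · rw [hYY s t hs.1 h ht.2]
              simp only [hfdef, min_eq_left h, max_eq_right h]
            · have comm : ∫ ω, Y s ω * Y t ω ∂P = ∫ ω, Y t ω * Y s ω ∂P :=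
                integral_congr_ae (ae_of_all _ fun ω => mul_comm _ _)
              rw [comm, hYY t s ht.1 h hs.2]
              simp only [hfdef, min_eq_right h, max_eq_left h]
        _ = ∫ t in (0 : ℝ)..L, f t := (hIcc f).symm
        _ = (∫ t in (0 : ℝ)..s, f t) + ∫ t in s..L, f t :=
            (intervalIntegral.integral_add_adjacent_intervals
              (hfc.intervalIntegrable _ _) (hfc.intervalIntegrable _ _)).symm
        _ = _ := by rw [e1, e2, poly_int, poly_int]; ring
    have e3 : ∫ s in (0 : ℝ)..L, ((1 / 2) * ε ^ 2 * β₀ * L * s + (1 / 8) * ε ^ 4 * L ^ 2 * s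
          - (1 / 4) * ε ^ 2 * β₀ * s ^ 2 + (1 / 8) * ε ^ 4 * L * s ^ 2
          - (1 / 12) * ε ^ 4 * s ^ 3)
        = ∫ s in (0 : ℝ)..L, (0 * s ^ 0
                + ((1 / 2) * ε ^ 2 * β₀ * L + (1 / 8) * ε ^ 4 * L ^ 2) * s ^ 1
                + (-(1 / 4) * ε ^ 2 * β₀ + (1 / 8) * ε ^ 4 * L) * s ^ 2
                + (-(1 / 12) * ε ^ 4) * s ^ 3
                + 0 * s ^ 4
                + (0 : ℝ) * s ^ 5) :=
      intervalIntegral.integral_congr fun s _ => by ring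
    calc ∫ s, ∫ t, (∫ ω, Y s ω * Y t ω ∂P) ∂μ ∂μ
        = ∫ s, ((1 / 2) * ε ^ 2 * β₀ * L * s + (1 / 8) * ε ^ 4 * L ^ 2 * s
          - (1 / 4) * ε ^ 2 * β₀ * s ^ 2 + (1 / 8) * ε ^ 4 * L * s ^ 2
          - (1 / 12) * ε ^ 4 * s ^ 3) ∂μ :=
          setIntegral_congr_fun measurableSet_Icc inner
      _ = ∫ s in (0 : ℝ)..L, ((1 / 2) * ε ^ 2 * β₀ * L * s + (1 / 8) * ε ^ 4 * L ^ 2 * s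
          - (1 / 4) * ε ^ 2 * β₀ * s ^ 2 + (1 / 8) * ε ^ 4 * L * s ^ 2
          - (1 / 12) * ε ^ 4 * s ^ 3) := (hIcc _).symm
      _ = _ := by rw [e3, poly_int]; ring
  have IXX : ∫ s, ∫ t, (∫ ω, X s ω * X t ω ∂P) ∂μ ∂μ
      = (1 / 18) * ε ^ 2 * β₀ * L ^ 3 + (1 / 144) * ε ^ 4 * L ^ 4 := by
    have inner : ∀ s ∈ Set.Icc (0 : ℝ) L, ∫ t, (∫ ω, X s ω * X t ω ∂P) ∂μ
        = (1 / 6) * ε ^ 2 * β₀ * L * s - (1 / 12) * ε ^ 2 * β₀ * s ^ 2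
          + (1 / 24) * ε ^ 4 * L * s ^ 2 - (1 / 36) * ε ^ 4 * s ^ 3 := by
      intro s hs
      set f : ℝ → ℝ := fun t => (1 / 6) * ε ^ 2 * (min s t) * β₀ + (1 / 24) * ε ^ 4 * (min s t) ^ 2 with hfdef
      have hfc : Continuous f := by
        refine Continuous.add ?_ ?_
        · exact (continuous_const.mul (continuous_const.min continuous_id)).mul continuous_const
        · exact continuous_const.mul ((continuous_const.min continuous_id).pow 2)
      have e1 : ∫ t in (0 : ℝ)..s, f t
          = ∫ t in (0 : ℝ)..s, (0 * t ^ 0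
                + ((1 / 6) * ε ^ 2 * β₀) * t ^ 1
                + ((1 / 24) * ε ^ 4) * t ^ 2
                + 0 * t ^ 3
                + 0 * t ^ 4
                + (0 : ℝ) * t ^ 5) := by
        refine intervalIntegral.integral_congr fun t ht => ?_
        rw [Set.uIcc_of_le hs.1] at ht
        simp only [hfdef, min_eq_right ht.2, max_eq_left ht.2]
        ring
      have e2 : ∫ t in s..L, f t
          = ∫ t in s..L, (((1 / 6) * ε ^ 2 * s * β₀ + (1 / 24) * ε ^ 4 * s ^ 2) * t ^ 0
                + 0 * t ^ 1
                + 0 * t ^ 2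
                + 0 * t ^ 3
                + 0 * t ^ 4
                + (0 : ℝ) * t ^ 5) := by
        refine intervalIntegral.integral_congr fun t ht => ?_
        rw [Set.uIcc_of_le hs.2] at ht
        simp only [hfdef, min_eq_left ht.1, max_eq_right ht.1]
        ring
      calc ∫ t, (∫ ω, X s ω * X t ω ∂P) ∂μ
          = ∫ t, f t ∂μ := by
            refine setIntegral_congr_fun measurableSet_Icc fun t ht => ?_
            rcases le_total s t with h | h
            · rw [hXX s t hs.1 h ht.2]
              simp only [hfdef, min_eq_left h]
            · have comm : ∫ ω, X s ω * X t ω ∂P = ∫ ω, X t ω * X s ω ∂P :=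
                integral_congr_ae (ae_of_all _ fun ω => mul_comm _ _)
              rw [comm, hXX t s ht.1 h hs.2]
              simp only [hfdef, min_eq_right h]
        _ = ∫ t in (0 : ℝ)..L, f t := (hIcc f).symm
        _ = (∫ t in (0 : ℝ)..s, f t) + ∫ t in s..L, f t :=
            (intervalIntegral.integral_add_adjacent_intervals
              (hfc.intervalIntegrable _ _) (hfc.intervalIntegrable _ _)).symm
        _ = _ := by rw [e1, e2, poly_int, poly_int]; ring
    have e3 : ∫ s in (0 : ℝ)..L, ((1 / 6) * ε ^ 2 * β₀ * L * s - (1 / 12) * ε ^ 2 * β₀ * s ^ 2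
          + (1 / 24) * ε ^ 4 * L * s ^ 2 - (1 / 36) * ε ^ 4 * s ^ 3)
        = ∫ s in (0 : ℝ)..L, (0 * s ^ 0
                + ((1 / 6) * ε ^ 2 * β₀ * L) * s ^ 1
                + (-(1 / 12) * ε ^ 2 * β₀ + (1 / 24) * ε ^ 4 * L) * s ^ 2
                + (-(1 / 36) * ε ^ 4) * s ^ 3
                + 0 * s ^ 4
                + (0 : ℝ) * s ^ 5) :=
      intervalIntegral.integral_congr fun s _ => by ring
    calc ∫ s, ∫ t, (∫ ω, X s ω * X t ω ∂P) ∂μ ∂μ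
        = ∫ s, ((1 / 6) * ε ^ 2 * β₀ * L * s - (1 / 12) * ε ^ 2 * β₀ * s ^ 2
          + (1 / 24) * ε ^ 4 * L * s ^ 2 - (1 / 36) * ε ^ 4 * s ^ 3) ∂μ :=
          setIntegral_congr_fun measurableSet_Icc inner
      _ = ∫ s in (0 : ℝ)..L, ((1 / 6) * ε ^ 2 * β₀ * L * s - (1 / 12) * ε ^ 2 * β₀ * s ^ 2
          + (1 / 24) * ε ^ 4 * L * s ^ 2 - (1 / 36) * ε ^ 4 * s ^ 3) := (hIcc _).symm
      _ = _ := by rw [e3, poly_int]; ring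
  have IXC : ∫ s, ∫ t, (∫ ω, X s ω * (X t ω * Y t ω) ∂P) ∂μ ∂μ
      = (5 / 288) * ε ^ 4 * β₀ * L ^ 4 + (7 / 2880) * ε ^ 6 * L ^ 5 := by
    have inner : ∀ s ∈ Set.Icc (0 : ℝ) L, ∫ t, (∫ ω, X s ω * (X t ω * Y t ω) ∂P) ∂μ
        = (1 / 24) * ε ^ 4 * β₀ * L ^ 2 * s + (1 / 96) * ε ^ 6 * L ^ 2 * s ^ 2
          - (1 / 72) * ε ^ 4 * β₀ * s ^ 3 - (1 / 192) * ε ^ 6 * s ^ 4 := by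
      intro s hs
      set f : ℝ → ℝ := fun t => (1 / 2) * ε ^ 2 * t *
        ((1 / 6) * ε ^ 2 * min s t * β₀ + (1 / 24) * ε ^ 4 * (min s t) ^ 2) with hfdef
      have hfc : Continuous f := by
        refine (continuous_const.mul continuous_id).mul (Continuous.add ?_ ?_)
        · exact (continuous_const.mul (continuous_const.min continuous_id)).mul continuous_const
        · exact continuous_const.mul ((continuous_const.min continuous_id).pow 2)
      have e1 : ∫ t in (0 : ℝ)..s, f t
          = ∫ t in (0 : ℝ)..s, (0 * t ^ 0
                + 0 * t ^ 1
                + ((1 / 12) * ε ^ 4 * β₀) * t ^ 2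
                + ((1 / 48) * ε ^ 6) * t ^ 3
                + 0 * t ^ 4
                + (0 : ℝ) * t ^ 5) := by
        refine intervalIntegral.integral_congr fun t ht => ?_
        rw [Set.uIcc_of_le hs.1] at ht
        simp only [hfdef, min_eq_right ht.2, max_eq_left ht.2]
        ring
      have e2 : ∫ t in s..L, f t
          = ∫ t in s..L, (0 * t ^ 0
                + ((1 / 12) * ε ^ 4 * s * β₀ + (1 / 48) * ε ^ 6 * s ^ 2) * t ^ 1
                + 0 * t ^ 2
                + 0 * t ^ 3
                + 0 * t ^ 4
                + (0 : ℝ) * t ^ 5) := by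
        refine intervalIntegral.integral_congr fun t ht => ?_
        rw [Set.uIcc_of_le hs.2] at ht
        simp only [hfdef, min_eq_left ht.1, max_eq_right ht.1]
        ring
      calc ∫ t, (∫ ω, X s ω * (X t ω * Y t ω) ∂P) ∂μ
          = ∫ t, f t ∂μ := by
            exact setIntegral_congr_fun measurableSet_Icc fun t ht => hXXY s hs t ht
        _ = ∫ t in (0 : ℝ)..L, f t := (hIcc f).symm
        _ = (∫ t in (0 : ℝ)..s, f t) + ∫ t in s..L, f t :=
            (intervalIntegral.integral_add_adjacent_intervals
              (hfc.intervalIntegrable _ _) (hfc.intervalIntegrable _ _)).symm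
        _ = _ := by rw [e1, e2, poly_int, poly_int]; ring
    have e3 : ∫ s in (0 : ℝ)..L, ((1 / 24) * ε ^ 4 * β₀ * L ^ 2 * s + (1 / 96) * ε ^ 6 * L ^ 2 * s ^ 2
          - (1 / 72) * ε ^ 4 * β₀ * s ^ 3 - (1 / 192) * ε ^ 6 * s ^ 4)
        = ∫ s in (0 : ℝ)..L, (0 * s ^ 0
                + ((1 / 24) * ε ^ 4 * β₀ * L ^ 2) * s ^ 1
                + ((1 / 96) * ε ^ 6 * L ^ 2) * s ^ 2
                + (-(1 / 72) * ε ^ 4 * β₀) * s ^ 3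
                + (-(1 / 192) * ε ^ 6) * s ^ 4
                + (0 : ℝ) * s ^ 5) :=
      intervalIntegral.integral_congr fun s _ => by ring
    calc ∫ s, ∫ t, (∫ ω, X s ω * (X t ω * Y t ω) ∂P) ∂μ ∂μ
        = ∫ s, ((1 / 24) * ε ^ 4 * β₀ * L ^ 2 * s + (1 / 96) * ε ^ 6 * L ^ 2 * s ^ 2
          - (1 / 72) * ε ^ 4 * β₀ * s ^ 3 - (1 / 192) * ε ^ 6 * s ^ 4) ∂μ :=
          setIntegral_congr_fun measurableSet_Icc inner
      _ = ∫ s in (0 : ℝ)..L, ((1 / 24) * ε ^ 4 * β₀ * L ^ 2 * s + (1 / 96) * ε ^ 6 * L ^ 2 * s ^ 2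
          - (1 / 72) * ε ^ 4 * β₀ * s ^ 3 - (1 / 192) * ε ^ 6 * s ^ 4) := (hIcc _).symm
      _ = _ := by rw [e3, poly_int]; ring
  have ICC : ∫ s, ∫ t, (∫ ω, (X s ω * Y s ω) * (X t ω * Y t ω) ∂P) ∂μ ∂μ
      = (1 / 72) * ε ^ 4 * β₀ ^ 2 * L ^ 4 + (1 / 90) * ε ^ 6 * β₀ * L ^ 5
        + (23 / 17280) * ε ^ 8 * L ^ 6 := by
    have inner : ∀ s ∈ Set.Icc (0 : ℝ) L, ∫ t, (∫ ω, (X s ω * Y s ω) * (X t ω * Y t ω) ∂P) ∂μ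
        = (1 / 12) * ε ^ 4 * β₀ ^ 2 * L * s ^ 2 + (1 / 48) * ε ^ 6 * β₀ * L ^ 2 * s ^ 2
          - (1 / 18) * ε ^ 4 * β₀ ^ 2 * s ^ 3 + (1 / 18) * ε ^ 6 * β₀ * L * s ^ 3
          + (1 / 192) * ε ^ 8 * L ^ 2 * s ^ 3 - (7 / 144) * ε ^ 6 * β₀ * s ^ 4
          + (1 / 144) * ε ^ 8 * L * s ^ 4 - (47 / 5760) * ε ^ 8 * s ^ 5 := by
      intro s hs
      set f : ℝ → ℝ := fun t => (1 / 12) * ε ^ 4 * (min s t) ^ 2 * β₀ ^ 2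
        + (1 / 18) * ε ^ 6 * (min s t) ^ 3 * β₀ + (1 / 144) * ε ^ 8 * (min s t) ^ 4
        + (1 / 4) * ε ^ 4 * s * t *
          ((1 / 6) * ε ^ 2 * (min s t) * β₀ + (1 / 24) * ε ^ 4 * (min s t) ^ 2) with hfdef
      have hfc : Continuous f := by
        have hmin : Continuous fun t : ℝ => min s t := continuous_const.min continuous_id
        exact ((((continuous_const.mul (hmin.pow 2)).mul continuous_const).add
          ((continuous_const.mul (hmin.pow 3)).mul continuous_const)).add
          (continuous_const.mul (hmin.pow 4))).add
          ((continuous_const.mul continuous_id).mul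
            (((continuous_const.mul hmin).mul continuous_const).add
              (continuous_const.mul (hmin.pow 2))))
      have e1 : ∫ t in (0 : ℝ)..s, f t
          = ∫ t in (0 : ℝ)..s, (0 * t ^ 0
                + 0 * t ^ 1
                + ((1 / 12) * ε ^ 4 * β₀ ^ 2 + (1 / 24) * ε ^ 6 * s * β₀) * t ^ 2
                + ((1 / 18) * ε ^ 6 * β₀ + (1 / 96) * ε ^ 8 * s) * t ^ 3
                + ((1 / 144) * ε ^ 8) * t ^ 4
                + (0 : ℝ) * t ^ 5) := by
        refine intervalIntegral.integral_congr fun t ht => ?_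
        rw [Set.uIcc_of_le hs.1] at ht
        simp only [hfdef, min_eq_right ht.2, max_eq_left ht.2]
        ring
      have e2 : ∫ t in s..L, f t
          = ∫ t in s..L, (((1 / 12) * ε ^ 4 * s ^ 2 * β₀ ^ 2 + (1 / 18) * ε ^ 6 * s ^ 3 * β₀ + (1 / 144) * ε ^ 8 * s ^ 4) * t ^ 0
                + ((1 / 24) * ε ^ 6 * s ^ 2 * β₀ + (1 / 96) * ε ^ 8 * s ^ 3) * t ^ 1
                + 0 * t ^ 2
                + 0 * t ^ 3
                + 0 * t ^ 4
                + (0 : ℝ) * t ^ 5) := by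
        refine intervalIntegral.integral_congr fun t ht => ?_
        rw [Set.uIcc_of_le hs.2] at ht
        simp only [hfdef, min_eq_left ht.1, max_eq_right ht.1]
        ring
      calc ∫ t, (∫ ω, (X s ω * Y s ω) * (X t ω * Y t ω) ∂P) ∂μ
          = ∫ t, f t ∂μ := by
            refine setIntegral_congr_fun measurableSet_Icc fun t ht => ?_
            rcases le_total s t with h | h
            · rw [hXYXY s t hs.1 h ht.2]
              simp only [hfdef, min_eq_left h]
              try ring
            · have comm : ∫ ω, (X s ω * Y s ω) * (X t ω * Y t ω) ∂P
                  = ∫ ω, (X t ω * Y t ω) * (X s ω * Y s ω) ∂P :=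
                integral_congr_ae (ae_of_all _ fun ω => mul_comm _ _)
              rw [comm, hXYXY t s ht.1 h hs.2]
              simp only [hfdef, min_eq_right h]
              ring
        _ = ∫ t in (0 : ℝ)..L, f t := (hIcc f).symm
        _ = (∫ t in (0 : ℝ)..s, f t) + ∫ t in s..L, f t :=
            (intervalIntegral.integral_add_adjacent_intervals
              (hfc.intervalIntegrable _ _) (hfc.intervalIntegrable _ _)).symm
        _ = _ := by rw [e1, e2, poly_int, poly_int]; ring
    have e3 : ∫ s in (0 : ℝ)..L, ((1 / 12) * ε ^ 4 * β₀ ^ 2 * L * s ^ 2 + (1 / 48) * ε ^ 6 * β₀ * L ^ 2 * s ^ 2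
          - (1 / 18) * ε ^ 4 * β₀ ^ 2 * s ^ 3 + (1 / 18) * ε ^ 6 * β₀ * L * s ^ 3
          + (1 / 192) * ε ^ 8 * L ^ 2 * s ^ 3 - (7 / 144) * ε ^ 6 * β₀ * s ^ 4
          + (1 / 144) * ε ^ 8 * L * s ^ 4 - (47 / 5760) * ε ^ 8 * s ^ 5)
        = ∫ s in (0 : ℝ)..L, (0 * s ^ 0
                + 0 * s ^ 1
                + ((1 / 12) * ε ^ 4 * β₀ ^ 2 * L + (1 / 48) * ε ^ 6 * β₀ * L ^ 2) * s ^ 2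
                + (-(1 / 18) * ε ^ 4 * β₀ ^ 2 + (1 / 18) * ε ^ 6 * β₀ * L + (1 / 192) * ε ^ 8 * L ^ 2) * s ^ 3
                + (-(7 / 144) * ε ^ 6 * β₀ + (1 / 144) * ε ^ 8 * L) * s ^ 4
                + (-(47 / 5760) * ε ^ 8) * s ^ 5) :=
      intervalIntegral.integral_congr fun s _ => by ring
    calc ∫ s, ∫ t, (∫ ω, (X s ω * Y s ω) * (X t ω * Y t ω) ∂P) ∂μ ∂μ
        = ∫ s, ((1 / 12) * ε ^ 4 * β₀ ^ 2 * L * s ^ 2 + (1 / 48) * ε ^ 6 * β₀ * L ^ 2 * s ^ 2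
          - (1 / 18) * ε ^ 4 * β₀ ^ 2 * s ^ 3 + (1 / 18) * ε ^ 6 * β₀ * L * s ^ 3
          + (1 / 192) * ε ^ 8 * L ^ 2 * s ^ 3 - (7 / 144) * ε ^ 6 * β₀ * s ^ 4
          + (1 / 144) * ε ^ 8 * L * s ^ 4 - (47 / 5760) * ε ^ 8 * s ^ 5) ∂μ :=
          setIntegral_congr_fun measurableSet_Icc inner
      _ = ∫ s in (0 : ℝ)..L, ((1 / 12) * ε ^ 4 * β₀ ^ 2 * L * s ^ 2 + (1 / 48) * ε ^ 6 * β₀ * L ^ 2 * s ^ 2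
          - (1 / 18) * ε ^ 4 * β₀ ^ 2 * s ^ 3 + (1 / 18) * ε ^ 6 * β₀ * L * s ^ 3
          + (1 / 192) * ε ^ 8 * L ^ 2 * s ^ 3 - (7 / 144) * ε ^ 6 * β₀ * s ^ 4
          + (1 / 144) * ε ^ 8 * L * s ^ 4 - (47 / 5760) * ε ^ 8 * s ^ 5) := (hIcc _).symm
      _ = _ := by rw [e3, poly_int]; ring
  have IYX : ∫ s, ∫ t, (∫ ω, Y s ω * X t ω ∂P) ∂μ ∂μ = 0 := by
    have inner : ∀ s ∈ Set.Icc (0 : ℝ) L, ∫ t, (∫ ω, Y s ω * X t ω ∂P) ∂μ = 0 := by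
      intro s hs
      have : ∫ t, (∫ ω, Y s ω * X t ω ∂P) ∂μ = ∫ t, (0 : ℝ) ∂μ := by
        refine setIntegral_congr_fun measurableSet_Icc fun t ht => ?_
        have comm : ∫ ω, Y s ω * X t ω ∂P = ∫ ω, X t ω * Y s ω ∂P :=
          integral_congr_ae (ae_of_all _ fun ω => mul_comm _ _)
        rw [comm, hXY t ht s hs]
      rw [this, integral_zero]
    calc ∫ s, ∫ t, (∫ ω, Y s ω * X t ω ∂P) ∂μ ∂μ = ∫ s, (0 : ℝ) ∂μ :=
          setIntegral_congr_fun measurableSet_Icc inner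
      _ = 0 := integral_zero _ _
  have IYC : ∫ s, ∫ t, (∫ ω, Y s ω * (X t ω * Y t ω) ∂P) ∂μ ∂μ = 0 := by
    have inner : ∀ s ∈ Set.Icc (0 : ℝ) L,
        ∫ t, (∫ ω, Y s ω * (X t ω * Y t ω) ∂P) ∂μ = 0 := by
      intro s hs
      have : ∫ t, (∫ ω, Y s ω * (X t ω * Y t ω) ∂P) ∂μ = ∫ t, (0 : ℝ) ∂μ :=
        setIntegral_congr_fun measurableSet_Icc fun t ht => hYXY s hs t ht
      rw [this, integral_zero]
    calc ∫ s, ∫ t, (∫ ω, Y s ω * (X t ω * Y t ω) ∂P) ∂μ ∂μ = ∫ s, (0 : ℝ) ∂μ :=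
          setIntegral_congr_fun measurableSet_Icc inner
      _ = 0 := integral_zero _ _
  -- second moment of N
  have hEN2 : ∫ ω, N ω ^ 2 ∂P
      = 64 * α₀ ^ 2 * ((1 / 6) * ε ^ 2 * β₀ * L ^ 3 + (1 / 12) * ε ^ 4 * L ^ 4)
        + 64 * β₀ ^ 2 * ((1 / 18) * ε ^ 2 * β₀ * L ^ 3 + (1 / 144) * ε ^ 4 * L ^ 4)
        + 64 * ((1 / 72) * ε ^ 4 * β₀ ^ 2 * L ^ 4 + (1 / 90) * ε ^ 6 * β₀ * L ^ 5
            + (23 / 17280) * ε ^ 8 * L ^ 6)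
        + 128 * β₀ * ((5 / 288) * ε ^ 4 * β₀ * L ^ 4 + (7 / 2880) * ε ^ 6 * L ^ 5) := by
    have expand : ∀ ω, N ω ^ 2
        = 64 * α₀ ^ 2 * ((∫ s, Y s ω ∂μ) * (∫ t, Y t ω ∂μ))
          + 64 * β₀ ^ 2 * ((∫ s, X s ω ∂μ) * (∫ t, X t ω ∂μ))
          + 64 * ((∫ s, X s ω * Y s ω ∂μ) * (∫ t, X t ω * Y t ω ∂μ))
          + 128 * (α₀ * β₀) * ((∫ s, Y s ω ∂μ) * (∫ t, X t ω ∂μ))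
          + 128 * α₀ * ((∫ s, Y s ω ∂μ) * (∫ t, X t ω * Y t ω ∂μ))
          + 128 * β₀ * ((∫ s, X s ω ∂μ) * (∫ t, X t ω * Y t ω ∂μ)) := by
      intro ω
      rw [hN' ω]
      ring
    calc ∫ ω, N ω ^ 2 ∂P
        = ∫ ω, (64 * α₀ ^ 2 * ((∫ s, Y s ω ∂μ) * (∫ t, Y t ω ∂μ))
          + 64 * β₀ ^ 2 * ((∫ s, X s ω ∂μ) * (∫ t, X t ω ∂μ))
          + 64 * ((∫ s, X s ω * Y s ω ∂μ) * (∫ t, X t ω * Y t ω ∂μ))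
          + 128 * (α₀ * β₀) * ((∫ s, Y s ω ∂μ) * (∫ t, X t ω ∂μ))
          + 128 * α₀ * ((∫ s, Y s ω ∂μ) * (∫ t, X t ω * Y t ω ∂μ))
          + 128 * β₀ * ((∫ s, X s ω ∂μ) * (∫ t, X t ω * Y t ω ∂μ))) ∂P :=
          integral_congr_ae (ae_of_all _ expand)
      _ = _ := by
          have i1 : Integrable (fun ω =>
              64 * α₀ ^ 2 * ((∫ s, Y s ω ∂μ) * (∫ t, Y t ω ∂μ))) P :=
            pYY.1.const_mul _
          have i2 : Integrable (fun ω =>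
              64 * β₀ ^ 2 * ((∫ s, X s ω ∂μ) * (∫ t, X t ω ∂μ))) P :=
            pXX.1.const_mul _
          have i3 : Integrable (fun ω =>
              64 * ((∫ s, X s ω * Y s ω ∂μ) * (∫ t, X t ω * Y t ω ∂μ))) P :=
            pCC.1.const_mul _
          have i4 : Integrable (fun ω =>
              128 * (α₀ * β₀) * ((∫ s, Y s ω ∂μ) * (∫ t, X t ω ∂μ))) P :=
            pYX.1.const_mul _
          have i5 : Integrable (fun ω =>
              128 * α₀ * ((∫ s, Y s ω ∂μ) * (∫ t, X t ω * Y t ω ∂μ))) P :=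
            pYC.1.const_mul _
          have i6 : Integrable (fun ω =>
              128 * β₀ * ((∫ s, X s ω ∂μ) * (∫ t, X t ω * Y t ω ∂μ))) P :=
            pXC.1.const_mul _
          have s12 : Integrable (fun ω =>
              64 * α₀ ^ 2 * ((∫ s, Y s ω ∂μ) * (∫ t, Y t ω ∂μ))
              + 64 * β₀ ^ 2 * ((∫ s, X s ω ∂μ) * (∫ t, X t ω ∂μ))) P := i1.add i2
          have s13 : Integrable (fun ω =>
              64 * α₀ ^ 2 * ((∫ s, Y s ω ∂μ) * (∫ t, Y t ω ∂μ))
              + 64 * β₀ ^ 2 * ((∫ s, X s ω ∂μ) * (∫ t, X t ω ∂μ))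
              + 64 * ((∫ s, X s ω * Y s ω ∂μ) * (∫ t, X t ω * Y t ω ∂μ))) P := s12.add i3
          have s14 : Integrable (fun ω =>
              64 * α₀ ^ 2 * ((∫ s, Y s ω ∂μ) * (∫ t, Y t ω ∂μ))
              + 64 * β₀ ^ 2 * ((∫ s, X s ω ∂μ) * (∫ t, X t ω ∂μ))
              + 64 * ((∫ s, X s ω * Y s ω ∂μ) * (∫ t, X t ω * Y t ω ∂μ))
              + 128 * (α₀ * β₀) * ((∫ s, Y s ω ∂μ) * (∫ t, X t ω ∂μ))) P := s13.add i4
          have s15 : Integrable (fun ω =>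
              64 * α₀ ^ 2 * ((∫ s, Y s ω ∂μ) * (∫ t, Y t ω ∂μ))
              + 64 * β₀ ^ 2 * ((∫ s, X s ω ∂μ) * (∫ t, X t ω ∂μ))
              + 64 * ((∫ s, X s ω * Y s ω ∂μ) * (∫ t, X t ω * Y t ω ∂μ))
              + 128 * (α₀ * β₀) * ((∫ s, Y s ω ∂μ) * (∫ t, X t ω ∂μ))
              + 128 * α₀ * ((∫ s, Y s ω ∂μ) * (∫ t, X t ω * Y t ω ∂μ))) P := s14.add i5
          rw [integral_add s15 i6,
            integral_add s14 i5,
            integral_add s13 i4,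
            integral_add s12 i3,
            integral_add i1 i2,
            integral_const_mul, integral_const_mul, integral_const_mul,
            integral_const_mul, integral_const_mul, integral_const_mul,
            pYY.2, pXX.2, pCC2, pYX.2, pYC2, pXC2,
            IYY, IXX, ICC, IYX, IYC, IXC]
          ring
  rw [hEN2, hEN]
  ring
end
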